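/- arXiv:2105.10597 — 7 statements merged into one kernel-verified Lean document; each statement's English description precedes it below -/
import Mathlib

section
/- For every T > 0 there exists a constant C₀ > 0, depending only on T, the constants c₁,…,c₆, F(0,0), G(0,0), α and ∫₀ᵀ H(s) ds, such that every pair (λ^A, λ^B) of continuous nonnegative functions on [0,T] satisfying, for all t ∈ [0,T], λ^A(t) = F( α ∫₀ᵗ h₁(t−u)λ^A(u) du , (1−α) ∫₀ᵗ h₂(t−u)λ^B(u) du ) and λ^B(t) = G( (1−α) ∫₀ᵗ h₃(t−u)λ^B(u) du , α ∫₀ᵗ h₄(t−u)λ^A(u) du ), obeys sup_{t∈[0,T]} ( λ^A(t) + λ^B(t) ) ≤ C₀. -/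
open MeasureTheory Filter Topology Set

/-- A priori bound: for every `T > 0` there is a constant `C₀ > 0` bounding
`λ^A + λ^B` on `[0,T]`, uniformly over all continuous nonnegative solutions of
the mean-field intensity equations on `[0,T]`. -/
theorem stmt1
    (α : ℝ) (hα : α ∈ Set.Ioo (0:ℝ) 1)
    (h₁ h₂ h₃ h₄ : ℝ → ℝ)
    (hmeas : Measurable h₁ ∧ Measurable h₂ ∧ Measurable h₃ ∧ Measurable h₄)
    (hpos : ∀ u, 0 ≤ u → 0 ≤ h₁ u ∧ 0 ≤ h₂ u ∧ 0 ≤ h₃ u ∧ 0 ≤ h₄ u)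
    (hH : ∀ T > (0:ℝ), IntegrableOn
      (fun t => α * h₁ t + (1 - α) * h₂ t + (1 - α) * h₃ t + α * h₄ t)
      (Set.Icc 0 T))
    (F G : ℝ → ℝ → ℝ)
    (c₁ c₂ c₃ c₄ c₅ c₆ : ℝ)
    (hc : 0 ≤ c₁ ∧ 0 ≤ c₂ ∧ 0 ≤ c₃ ∧ 0 ≤ c₄ ∧ 0 ≤ c₅ ∧ 0 ≤ c₆)
    (hFpos : ∀ x y, 0 ≤ x → 0 ≤ y → 0 ≤ F x y)
    (hGpos : ∀ x y, 0 ≤ x → 0 ≤ y → 0 ≤ G x y)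
    (hFbound : ∀ x y, 0 ≤ x → 0 ≤ y → F x y ≤ c₁ * (x + y) + c₂)
    (hFlipx : ∀ x x' y, 0 ≤ x → 0 ≤ x' → 0 ≤ y →
      |F x y - F x' y| ≤ c₃ * |x - x'|)
    (hFlipy : ∀ x y y', 0 ≤ x → 0 ≤ y → 0 ≤ y' →
      |F x y - F x y'| ≤ (c₄ * x + c₅) * |y - y'|)
    (hGlip : ∀ x x' y y', 0 ≤ x → 0 ≤ x' → 0 ≤ y → 0 ≤ y' →
      |G x y - G x' y'| ≤ c₆ * (|x - x'| + |y - y'|))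
    (T : ℝ) (hT : 0 < T) :
    ∃ C₀ : ℝ, 0 < C₀ ∧
      ∀ lA lB : ℝ → ℝ,
        ContinuousOn lA (Set.Icc 0 T) → ContinuousOn lB (Set.Icc 0 T) →
        (∀ t ∈ Set.Icc 0 T, 0 ≤ lA t ∧ 0 ≤ lB t) →
        (∀ t ∈ Set.Icc 0 T,
          lA t = F (α * ∫ u in (0:ℝ)..t, h₁ (t - u) * lA u)
            ((1 - α) * ∫ u in (0:ℝ)..t, h₂ (t - u) * lB u)) →
        (∀ t ∈ Set.Icc 0 T,
          lB t = G ((1 - α) * ∫ u in (0:ℝ)..t, h₃ (t - u) * lB u)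
            (α * ∫ u in (0:ℝ)..t, h₄ (t - u) * lA u)) →
        ∀ t ∈ Set.Icc 0 T, lA t + lB t ≤ C₀ := by
  obtain ⟨hα0, hα1⟩ := hα
  obtain ⟨hm1, hm2, hm3, hm4⟩ := hmeas
  obtain ⟨hc1, hc2, hc3, hc4, hc5, hc6⟩ := hc
  have hα1' : (0:ℝ) < 1 - α := by linarith
  set H : ℝ → ℝ := fun t => α * h₁ t + (1 - α) * h₂ t + (1 - α) * h₃ t + α * h₄ t
    with hHdef
  have HmeasH : Measurable H :=
    (((hm1.const_mul α).add (hm2.const_mul (1 - α))).add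
      (hm3.const_mul (1 - α))).add (hm4.const_mul α)
  have Hnn : ∀ s, 0 ≤ s → 0 ≤ H s := by
    intro s hs
    obtain ⟨p1, p2, p3, p4⟩ := hpos s hs
    have e1 : (0:ℝ) ≤ α * h₁ s := mul_nonneg hα0.le p1
    have e2 : (0:ℝ) ≤ (1 - α) * h₂ s := mul_nonneg hα1'.le p2
    have e3 : (0:ℝ) ≤ (1 - α) * h₃ s := mul_nonneg hα1'.le p3
    have e4 : (0:ℝ) ≤ α * h₄ s := mul_nonneg hα0.le p4
    simp only [hHdef]; linarith
  have HIcc : IntegrableOn H (Icc 0 T) := hH T hT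
  have HintT : IntervalIntegrable H volume 0 T :=
    (intervalIntegrable_iff_integrableOn_Icc_of_le hT.le).2 HIcc
  have Hsubint : ∀ a b : ℝ, a ∈ Icc 0 T → b ∈ Icc 0 T → IntervalIntegrable H volume a b := by
    intro a b ha hb
    apply HintT.mono_set
    exact uIcc_subset_uIcc (by rw [uIcc_of_le hT.le]; exact ha)
      (by rw [uIcc_of_le hT.le]; exact hb)
  set P : ℝ → ℝ := fun x => ∫ s in (0:ℝ)..x, H s with hPdef
  have Pseg : ∀ a b : ℝ, a ∈ Icc 0 T → b ∈ Icc 0 T →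
      (∫ s in a..b, H s) = P b - P a := by
    intro a b ha hb
    have := intervalIntegral.integral_add_adjacent_intervals
      (Hsubint 0 a (left_mem_Icc.2 hT.le) ha) (Hsubint a b ha hb)
    simp only [hPdef]
    linarith [this]
  have segnn : ∀ a b : ℝ, 0 ≤ a → a ≤ b → b ≤ T → 0 ≤ ∫ s in a..b, H s := by
    intro a b ha hab hb
    exact intervalIntegral.integral_nonneg hab
      (fun u hu => Hnn u (le_trans ha hu.1))
  have Pnn : ∀ a ∈ Icc 0 T, 0 ≤ P a := fun a ha => segnn 0 a le_rfl ha.1 ha.2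
  have Pmono : ∀ a b : ℝ, a ∈ Icc 0 T → b ∈ Icc 0 T → a ≤ b → P a ≤ P b := by
    intro a b ha hb hab
    have := segnn a b ha.1 hab hb.2
    rw [Pseg a b ha hb] at this
    linarith
  set I : ℝ := P T with hIdef
  have Inn : 0 ≤ I := Pnn T (right_mem_Icc.2 hT.le)
  have PleI : ∀ a b : ℝ, a ∈ Icc 0 T → b ∈ Icc 0 T → a ≤ b →
      (∫ s in a..b, H s) ≤ I := by
    intro a b ha hb hab
    rw [Pseg a b ha hb]
    have h1 := Pmono b T hb (right_mem_Icc.2 hT.le) hb.2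
    have h2 := Pnn a ha
    linarith
  -- constants
  set K : ℝ := max c₁ c₆ with hKdef
  have hK0 : 0 ≤ K := le_trans hc1 (le_max_left _ _)
  set C : ℝ := c₂ + G 0 0 with hCdef
  have hG00 : 0 ≤ G 0 0 := hGpos 0 0 le_rfl le_rfl
  have hC0 : 0 ≤ C := by simp only [hCdef]; linarith
  -- choose δ
  set ε : ℝ := 1 / (2 * (K + 1)) with hεdef
  have hε0 : 0 < ε := by positivity
  have Pcont : ContinuousOn P (Icc 0 T) := by
    have := intervalIntegral.continuousOn_primitive_interval
      (a := (0:ℝ)) (b := T) (f := H) (μ := volume) (by rwa [uIcc_of_le hT.le])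
    rwa [uIcc_of_le hT.le] at this
  have hδ : ∃ δ : ℝ, 0 < δ ∧ δ ≤ T ∧ P δ ≤ ε := by
    have hP0 : P 0 = 0 := intervalIntegral.integral_same
    have htend : Filter.Tendsto P (nhdsWithin 0 (Icc 0 T)) (nhds 0) := by
      have := (Pcont 0 (left_mem_Icc.2 hT.le))
      rwa [ContinuousWithinAt, hP0] at this
    have hev : ∀ᶠ x in nhdsWithin 0 (Icc 0 T), P x < ε :=
      htend.eventually_lt_const hε0
    rw [eventually_iff, Metric.mem_nhdsWithin_iff] at hev
    obtain ⟨r, hr0, hr⟩ := hev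
    refine ⟨min (r/2) T, by positivity, min_le_right _ _, ?_⟩
    have h1 : min (r/2) T ∈ Icc 0 T := ⟨by positivity, min_le_right _ _⟩
    have h2 : min (r/2) T ∈ Metric.ball (0:ℝ) r := by
      rw [Metric.mem_ball, Real.dist_eq, sub_zero, abs_of_nonneg (by positivity)]
      calc min (r/2) T ≤ r/2 := min_le_left _ _
        _ < r := by linarith
    exact (hr ⟨h2, h1⟩).le
  obtain ⟨δ, hδ0, hδT, hPδ⟩ := hδ
  -- number of steps
  set n : ℕ := ⌈T / δ⌉₊ with hndef
  have hnT : T ≤ (n:ℝ) * δ := by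
    have h := Nat.le_ceil (T / δ)
    calc T = (T/δ) * δ := by field_simp
      _ ≤ (n:ℝ) * δ := mul_le_mul_of_nonneg_right h hδ0.le
  -- the recursive bound
  set B : ℕ → ℝ := fun k => Nat.rec C (fun _ b => 2*C + 2*K*I*b) k with hBdef
  have hB0 : B 0 = C := rfl
  have hBsucc : ∀ k, B (k+1) = 2*C + 2*K*I*(B k) := fun k => rfl
  have hBnn : ∀ k, 0 ≤ B k := by
    intro k; induction k with
    | zero => rw [hB0]; exact hC0
    | succ k ih => rw [hBsucc]; linarith [mul_nonneg (mul_nonneg hK0 Inn) ih]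
  refine ⟨B n + 1, by linarith [hBnn n], ?_⟩
  intro lA lB hcA hcB hnnAB heqA heqB
  set φ : ℝ → ℝ := fun t => lA t + lB t with hφdef
  have hcφ : ContinuousOn φ (Icc 0 T) := hcA.add hcB
  have hφnn : ∀ t ∈ Icc 0 T, 0 ≤ φ t := fun t ht =>
    add_nonneg (hnnAB t ht).1 (hnnAB t ht).2
  -- generic integrability of reflected kernels
  have gen : ∀ (h : ℝ → ℝ) (c : ℝ), Measurable h → 0 < c →
      (∀ s ∈ Icc 0 T, 0 ≤ h s ∧ c * h s ≤ H s) →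
      ∀ t ∈ Icc 0 T, IntervalIntegrable (fun u => h (t - u)) volume 0 t := by
    intro h c hmh hc0 hb t ht
    have hint : IntegrableOn h (Icc 0 t) := by
      apply Integrable.mono'
        ((HIcc.mono_set (Icc_subset_Icc le_rfl ht.2)).const_mul c⁻¹)
      · exact hmh.aestronglyMeasurable.restrict
      · refine ae_restrict_of_forall_mem measurableSet_Icc ?_
        intro s hs
        have hs' : s ∈ Icc 0 T := ⟨hs.1, hs.2.trans ht.2⟩
        obtain ⟨hnn, hle⟩ := hb s hs'
        rw [Real.norm_eq_abs, abs_of_nonneg hnn]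
        have hmul := mul_le_mul_of_nonneg_left hle (inv_nonneg.2 hc0.le)
        have hcc : c⁻¹ * c = 1 := inv_mul_cancel₀ hc0.ne'
        nlinarith [hmul, hcc]
    have hint' : IntervalIntegrable h volume 0 t :=
      (intervalIntegrable_iff_integrableOn_Icc_of_le ht.1).2 hint
    have h2 := hint'.comp_sub_left t
    simpa using h2.symm
  have mulcont : ∀ (g : ℝ → ℝ),
      (∀ t ∈ Icc 0 T, IntervalIntegrable (fun u => g (t-u)) volume 0 t) →
      ∀ (l : ℝ → ℝ), ContinuousOn l (Icc 0 T) →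
      ∀ t ∈ Icc 0 T, IntervalIntegrable (fun u => g (t-u) * l u) volume 0 t := by
    intro g hg l hl t ht
    apply (hg t ht).mul_continuousOn
    rw [uIcc_of_le ht.1]
    exact hl.mono (Icc_subset_Icc le_rfl ht.2)
  have gh₁ : ∀ t ∈ Icc 0 T, IntervalIntegrable (fun u => h₁ (t - u)) volume 0 t := by
    refine gen h₁ α hm1 hα0 ?_
    intro s hs
    obtain ⟨p1, p2, p3, p4⟩ := hpos s hs.1
    refine ⟨p1, ?_⟩
    simp only [hHdef]
    linarith [mul_nonneg hα1'.le p2, mul_nonneg hα1'.le p3, mul_nonneg hα0.le p4]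
  have gh₂ : ∀ t ∈ Icc 0 T, IntervalIntegrable (fun u => h₂ (t - u)) volume 0 t := by
    refine gen h₂ (1-α) hm2 hα1' ?_
    intro s hs
    obtain ⟨p1, p2, p3, p4⟩ := hpos s hs.1
    refine ⟨p2, ?_⟩
    simp only [hHdef]
    linarith [mul_nonneg hα0.le p1, mul_nonneg hα1'.le p3, mul_nonneg hα0.le p4]
  have gh₃ : ∀ t ∈ Icc 0 T, IntervalIntegrable (fun u => h₃ (t - u)) volume 0 t := by
    refine gen h₃ (1-α) hm3 hα1' ?_
    intro s hs
    obtain ⟨p1, p2, p3, p4⟩ := hpos s hs.1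
    refine ⟨p3, ?_⟩
    simp only [hHdef]
    linarith [mul_nonneg hα0.le p1, mul_nonneg hα1'.le p2, mul_nonneg hα0.le p4]
  have gh₄ : ∀ t ∈ Icc 0 T, IntervalIntegrable (fun u => h₄ (t - u)) volume 0 t := by
    refine gen h₄ α hm4 hα0 ?_
    intro s hs
    obtain ⟨p1, p2, p3, p4⟩ := hpos s hs.1
    refine ⟨p4, ?_⟩
    simp only [hHdef]
    linarith [mul_nonneg hα0.le p1, mul_nonneg hα1'.le p2, mul_nonneg hα1'.le p3]
  have gH : ∀ t ∈ Icc 0 T, IntervalIntegrable (fun u => H (t - u)) volume 0 t :=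
    gen H 1 HmeasH one_pos (fun s hs => ⟨Hnn s hs.1, by rw [one_mul]⟩)
  have int1 := mulcont h₁ gh₁ lA hcA
  have int2 := mulcont h₂ gh₂ lB hcB
  have int3 := mulcont h₃ gh₃ lB hcB
  have int4 := mulcont h₄ gh₄ lA hcA
  have intHφ := mulcont H gH φ hcφ
  -- the key integral inequality
  have key : ∀ t ∈ Icc 0 T, φ t ≤ C + K * ∫ u in (0:ℝ)..t, H (t-u) * φ u := by
    intro t ht
    have humem : ∀ u ∈ Icc (0:ℝ) t, u ∈ Icc 0 T ∧ 0 ≤ t - u := fun u hu =>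
      ⟨⟨hu.1, hu.2.trans ht.2⟩, by linarith [hu.2]⟩
    have i1nn : 0 ≤ ∫ u in (0:ℝ)..t, h₁ (t-u) * lA u :=
      intervalIntegral.integral_nonneg ht.1 (fun u hu =>
        mul_nonneg (hpos _ (humem u hu).2).1 (hnnAB u (humem u hu).1).1)
    have i2nn : 0 ≤ ∫ u in (0:ℝ)..t, h₂ (t-u) * lB u :=
      intervalIntegral.integral_nonneg ht.1 (fun u hu =>
        mul_nonneg (hpos _ (humem u hu).2).2.1 (hnnAB u (humem u hu).1).2)
    have i3nn : 0 ≤ ∫ u in (0:ℝ)..t, h₃ (t-u) * lB u :=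
      intervalIntegral.integral_nonneg ht.1 (fun u hu =>
        mul_nonneg (hpos _ (humem u hu).2).2.2.1 (hnnAB u (humem u hu).1).2)
    have i4nn : 0 ≤ ∫ u in (0:ℝ)..t, h₄ (t-u) * lA u :=
      intervalIntegral.integral_nonneg ht.1 (fun u hu =>
        mul_nonneg (hpos _ (humem u hu).2).2.2.2 (hnnAB u (humem u hu).1).1)
    have haA : 0 ≤ α * ∫ u in (0:ℝ)..t, h₁ (t-u) * lA u := mul_nonneg hα0.le i1nn
    have haB : 0 ≤ (1-α) * ∫ u in (0:ℝ)..t, h₂ (t-u) * lB u := mul_nonneg hα1'.le i2nn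
    have haC : 0 ≤ (1-α) * ∫ u in (0:ℝ)..t, h₃ (t-u) * lB u := mul_nonneg hα1'.le i3nn
    have haD : 0 ≤ α * ∫ u in (0:ℝ)..t, h₄ (t-u) * lA u := mul_nonneg hα0.le i4nn
    have boundA : lA t ≤ c₁ * ((α * ∫ u in (0:ℝ)..t, h₁ (t-u) * lA u)
        + ((1-α) * ∫ u in (0:ℝ)..t, h₂ (t-u) * lB u)) + c₂ := by
      rw [heqA t ht]; exact hFbound _ _ haA haB
    have boundB : lB t ≤ G 0 0 + c₆ * (((1-α) * ∫ u in (0:ℝ)..t, h₃ (t-u) * lB u)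
        + (α * ∫ u in (0:ℝ)..t, h₄ (t-u) * lA u)) := by
      rw [heqB t ht]
      have hg := hGlip ((1-α) * ∫ u in (0:ℝ)..t, h₃ (t-u) * lB u) 0
        (α * ∫ u in (0:ℝ)..t, h₄ (t-u) * lA u) 0 haC le_rfl haD le_rfl
      rw [sub_zero, sub_zero, abs_of_nonneg haC, abs_of_nonneg haD] at hg
      have := (abs_le.1 hg).2
      linarith
    -- sum of the four scaled integrals is at most the convolution with H
    have j1 : IntervalIntegrable (fun u => α * (h₁ (t-u) * lA u)) volume 0 t :=
      (int1 t ht).const_mul α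
    have j2 : IntervalIntegrable (fun u => (1-α) * (h₂ (t-u) * lB u)) volume 0 t :=
      (int2 t ht).const_mul (1-α)
    have j3 : IntervalIntegrable (fun u => (1-α) * (h₃ (t-u) * lB u)) volume 0 t :=
      (int3 t ht).const_mul (1-α)
    have j4 : IntervalIntegrable (fun u => α * (h₄ (t-u) * lA u)) volume 0 t :=
      (int4 t ht).const_mul α
    have sums : (α * ∫ u in (0:ℝ)..t, h₁ (t-u) * lA u)
        + ((1-α) * ∫ u in (0:ℝ)..t, h₂ (t-u) * lB u)
        + ((1-α) * ∫ u in (0:ℝ)..t, h₃ (t-u) * lB u)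
        + (α * ∫ u in (0:ℝ)..t, h₄ (t-u) * lA u)
        ≤ ∫ u in (0:ℝ)..t, H (t-u) * φ u := by
      rw [← intervalIntegral.integral_const_mul α, ← intervalIntegral.integral_const_mul (1-α),
        ← intervalIntegral.integral_const_mul (1-α), ← intervalIntegral.integral_const_mul α]
      rw [← intervalIntegral.integral_add j1 j2, ← intervalIntegral.integral_add (j1.add j2) j3,
        ← intervalIntegral.integral_add ((j1.add j2).add j3) j4]
      apply intervalIntegral.integral_mono_on ht.1 (((j1.add j2).add j3).add j4) (intHφ t ht)
      intro u hu
      obtain ⟨huT, hut⟩ := humem u hu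
      obtain ⟨p1, p2, p3, p4⟩ := hpos _ hut
      obtain ⟨q1, q2⟩ := hnnAB u huT
      simp only [hHdef, hφdef]
      linarith [mul_nonneg (mul_nonneg hα0.le p1) q2,
        mul_nonneg (mul_nonneg hα1'.le p2) q1,
        mul_nonneg (mul_nonneg hα1'.le p3) q1,
        mul_nonneg (mul_nonneg hα0.le p4) q2]
    have e1 : c₁ * ((α * ∫ u in (0:ℝ)..t, h₁ (t-u) * lA u)
        + ((1-α) * ∫ u in (0:ℝ)..t, h₂ (t-u) * lB u))
        ≤ K * ((α * ∫ u in (0:ℝ)..t, h₁ (t-u) * lA u)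
        + ((1-α) * ∫ u in (0:ℝ)..t, h₂ (t-u) * lB u)) :=
      mul_le_mul_of_nonneg_right (le_max_left _ _) (by linarith)
    have e2 : c₆ * (((1-α) * ∫ u in (0:ℝ)..t, h₃ (t-u) * lB u)
        + (α * ∫ u in (0:ℝ)..t, h₄ (t-u) * lA u))
        ≤ K * (((1-α) * ∫ u in (0:ℝ)..t, h₃ (t-u) * lB u)
        + (α * ∫ u in (0:ℝ)..t, h₄ (t-u) * lA u)) :=
      mul_le_mul_of_nonneg_right (le_max_right _ _) (by linarith)
    have e3 := mul_le_mul_of_nonneg_left sums hK0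
    have hφt : φ t = lA t + lB t := rfl
    linarith [e1, e2, e3, boundA, boundB, hCdef, hφt]
  -- main induction
  have main : ∀ k : ℕ, ∀ t ∈ Icc (0:ℝ) T, t ≤ (k:ℝ) * δ → φ t ≤ B k := by
    intro k
    induction k with
    | zero =>
      intro t ht ht0
      have htz : t = 0 := le_antisymm (by simpa using ht0) ht.1
      subst htz
      have hk := key 0 (left_mem_Icc.2 hT.le)
      rw [hB0]
      simpa using hk
    | succ k ih =>
      intro t ht htk
      push_cast at htk
      set b : ℝ := min (((k:ℝ)+1) * δ) T with hbdef
      have hb0 : 0 ≤ b := le_min (by positivity) hT.le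
      have hbT : b ≤ T := min_le_right _ _
      have hJsub : Icc 0 b ⊆ Icc 0 T := Icc_subset_Icc le_rfl hbT
      obtain ⟨ts, hts, hmax⟩ := isCompact_Icc.exists_isMaxOn
        ⟨0, left_mem_Icc.2 hb0⟩ (hcφ.mono hJsub)
      set N : ℝ := φ ts with hNdef
      have htsT : ts ∈ Icc 0 T := hJsub hts
      have hNnn : 0 ≤ N := hφnn ts htsT
      have hmax' : ∀ s ∈ Icc (0:ℝ) b, φ s ≤ N := fun s hs => hmax hs
      have htb : t ∈ Icc (0:ℝ) b := ⟨ht.1, le_min htk ht.2⟩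
      have hgoal : N ≤ B (k+1) := by
        set m : ℝ := max (ts - δ) 0 with hmdef
        have hm0 : 0 ≤ m := le_max_right _ _
        have hmts : m ≤ ts := max_le (by linarith [hδ0]) htsT.1
        have hmT : m ≤ T := hmts.trans htsT.2
        have htsb : ts ≤ ((k:ℝ)+1) * δ := hts.2.trans (min_le_left _ _)
        have hmk : m ≤ (k:ℝ) * δ := by
          apply max_le
          · linarith
          · positivity
        have iL : IntervalIntegrable (fun u => H (ts-u) * φ u) volume 0 m :=
          (intHφ ts htsT).mono_set
            (by rw [uIcc_of_le hm0, uIcc_of_le htsT.1]; exact Icc_subset_Icc le_rfl hmts)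
        have iR : IntervalIntegrable (fun u => H (ts-u) * φ u) volume m ts :=
          (intHφ ts htsT).mono_set
            (by rw [uIcc_of_le hmts, uIcc_of_le htsT.1]; exact Icc_subset_Icc hm0 le_rfl)
        have hsplit : (∫ u in (0:ℝ)..ts, H (ts-u) * φ u)
            = (∫ u in (0:ℝ)..m, H (ts-u) * φ u) + ∫ u in m..ts, H (ts-u) * φ u :=
          (intervalIntegral.integral_add_adjacent_intervals iL iR).symm
        -- left part
        have iLH : IntervalIntegrable (fun u => H (ts-u) * B k) volume 0 m :=
          ((gH ts htsT).mono_set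
            (by rw [uIcc_of_le hm0, uIcc_of_le htsT.1];
                exact Icc_subset_Icc le_rfl hmts)).mul_const _
        have hL : (∫ u in (0:ℝ)..m, H (ts-u) * φ u) ≤ B k * I := by
          have step1 : (∫ u in (0:ℝ)..m, H (ts-u) * φ u)
              ≤ ∫ u in (0:ℝ)..m, H (ts-u) * B k := by
            apply intervalIntegral.integral_mono_on hm0 iL iLH
            intro u hu
            have huT : u ∈ Icc (0:ℝ) T := ⟨hu.1, hu.2.trans hmT⟩
            have hh1 : 0 ≤ H (ts - u) := Hnn _ (by linarith [hu.2, hmts])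
            exact mul_le_mul_of_nonneg_left (ih u huT (hu.2.trans hmk)) hh1
          have ecs := intervalIntegral.integral_comp_sub_left (a := (0:ℝ)) (b := m) H ts
          rw [sub_zero] at ecs
          have step2 : (∫ u in (0:ℝ)..m, H (ts-u) * B k)
              = B k * ∫ s in (ts - m)..ts, H s := by
            rw [intervalIntegral.integral_mul_const, ecs, mul_comm]
          have step3 : (∫ s in (ts - m)..ts, H s) ≤ I :=
            PleI (ts - m) ts ⟨by linarith, by linarith [htsT.2]⟩ htsT (by linarith)
          calc (∫ u in (0:ℝ)..m, H (ts-u) * φ u)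
              ≤ ∫ u in (0:ℝ)..m, H (ts-u) * B k := step1
            _ = B k * ∫ s in (ts - m)..ts, H s := step2
            _ ≤ B k * I := mul_le_mul_of_nonneg_left step3 (hBnn k)
        -- right part
        have iRH : IntervalIntegrable (fun u => H (ts-u) * N) volume m ts :=
          ((gH ts htsT).mono_set
            (by rw [uIcc_of_le hmts, uIcc_of_le htsT.1];
                exact Icc_subset_Icc hm0 le_rfl)).mul_const _
        have hR : (∫ u in m..ts, H (ts-u) * φ u) ≤ N * ε := by
          have step1 : (∫ u in m..ts, H (ts-u) * φ u)
              ≤ ∫ u in m..ts, H (ts-u) * N := by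
            apply intervalIntegral.integral_mono_on hmts iR iRH
            intro u hu
            have hub : u ∈ Icc (0:ℝ) b := ⟨hm0.trans hu.1, hu.2.trans hts.2⟩
            have hh1 : 0 ≤ H (ts - u) := Hnn _ (by linarith [hu.2])
            exact mul_le_mul_of_nonneg_left (hmax' u hub) hh1
          have ecs := intervalIntegral.integral_comp_sub_left (a := m) (b := ts) H ts
          rw [sub_self] at ecs
          have step2 : (∫ u in m..ts, H (ts-u) * N)
              = N * ∫ s in (0:ℝ)..(ts - m), H s := by
            rw [intervalIntegral.integral_mul_const, ecs, mul_comm]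
          have htm : ts - m ≤ δ := by
            have := le_max_left (ts - δ) (0:ℝ)
            simp only [hmdef] at *
            linarith [this]
          have step3 : (∫ s in (0:ℝ)..(ts - m), H s) ≤ P δ :=
            Pmono (ts - m) δ ⟨by linarith, by linarith [hδT]⟩ ⟨hδ0.le, hδT⟩ htm
          calc (∫ u in m..ts, H (ts-u) * φ u)
              ≤ ∫ u in m..ts, H (ts-u) * N := step1
            _ = N * ∫ s in (0:ℝ)..(ts - m), H s := step2
            _ ≤ N * P δ := mul_le_mul_of_nonneg_left step3 hNnn
            _ ≤ N * ε := mul_le_mul_of_nonneg_left hPδ hNnn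
        have hKey := key ts htsT
        rw [hsplit] at hKey
        have hKε : K * ε ≤ 1/2 := by
          rw [hεdef, mul_one_div, div_le_iff₀ (by positivity : (0:ℝ) < 2*(K+1))]
          linarith
        have hstep : K * ((∫ u in (0:ℝ)..m, H (ts-u) * φ u)
            + ∫ u in m..ts, H (ts-u) * φ u) ≤ K * (B k * I + N * ε) :=
          mul_le_mul_of_nonneg_left (add_le_add hL hR) hK0
        have hNhalf : K * (N * ε) ≤ N * (1/2) := by
          have : N * (K * ε) ≤ N * (1/2) := mul_le_mul_of_nonneg_left hKε hNnn
          linarith [this, (by ring : K * (N * ε) = N * (K * ε))]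
        have hfin : N ≤ C + K * (B k * I) + N * (1/2) := by
          have hexp : K * (B k * I + N * ε) = K * (B k * I) + K * (N * ε) := by ring
          clear_value N ε K C I B; linarith [hKey, hstep, hNhalf, hexp, hNdef]
        have h2 : N ≤ 2*C + 2*(K*(B k * I)) := by clear_value N ε K C I B; linarith [hfin]
        calc N ≤ 2*C + 2*(K*(B k * I)) := h2
          _ = 2*C + 2*K*I*(B k) := by ring
          _ = B (k+1) := (hBsucc k).symm
      exact le_trans (hmax' t htb) hgoal
  intro t ht
  have hfinal : φ t ≤ B n := main n t ht (ht.2.trans hnT)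
  simp only [hφdef] at hfinal
  linarith
end

section
/- Suppose κ₂ = κ₄ = 0 (fully decoupled case). Then for the general mean-field system: if ‖Φ_A‖_L · κ₁ < 1 then sup_{t≥0} λ^A(t) < ∞, and if ‖Φ_B‖_L · κ₃ < 1 then sup_{t≥0} λ^B(t) < ∞. Moreover, for the linear mean-field system: (1) if κ₁ < 1 then λ^A(t) → μ_A/(1−κ₁) as t → ∞, and if κ₃ < 1 then λ^B(t) → μ_B/(1−κ₃) as t → ∞; (2) if κ₁ > 1 and μ_A > 0 then λ^A(t) → +∞ as t → ∞, and if κ₃ > 1 and μ_B > 0 then λ^B(t) → +∞ as t → ∞. -/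
open MeasureTheory Filter Topology Set
open scoped ENNReal

/-- Convolution term `∫₀ᵗ h(t-u) f(u) du`. -/
noncomputable def convK (h f : ℝ → ℝ) (t : ℝ) : ℝ :=
  ∫ u in (0:ℝ)..t, h (t - u) * f u

/-- `L¹` norm on `[0,∞)` of a kernel. -/
noncomputable def l1 (h : ℝ → ℝ) : ℝ :=
  ∫ s in Set.Ioi (0:ℝ), h s

/-- A nonnegative measurable kernel with finite `L¹` norm on `[0,∞)`. -/
def KernelL1 (h : ℝ → ℝ) : Prop :=
  Measurable h ∧ (∀ u, 0 ≤ u → 0 ≤ h u) ∧ IntegrableOn h (Set.Ioi 0)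

/-- A nonnegative integrable kernel vanishing at infinity. -/
def KernelOK (h : ℝ → ℝ) : Prop :=
  KernelL1 h ∧ Tendsto h atTop (𝓝 0)

/-- Properties of the inhibition kernel `Φ_{B→A}`. -/
def InhibOK (Φ : ℝ → ℝ) : Prop :=
  (∃ K, 0 ≤ K ∧ ∀ x y, 0 ≤ x → 0 ≤ y → |Φ x - Φ y| ≤ K * |x - y|) ∧
  AntitoneOn Φ (Set.Ici 0) ∧ Φ 0 = 1 ∧
  (∀ x, 0 ≤ x → 0 ≤ Φ x ∧ Φ x ≤ 1) ∧
  Tendsto Φ atTop (𝓝 0)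

/-- Properties of the feedback kernel `Φ_{A→B}`. -/
def FeedOK (Φ : ℝ → ℝ) : Prop :=
  (∃ K, 0 ≤ K ∧ ∀ x y, 0 ≤ x → 0 ≤ y → |Φ x - Φ y| ≤ K * |x - y|) ∧
  MonotoneOn Φ (Set.Ici 0) ∧ Φ 0 = 0 ∧
  (∀ x, 0 ≤ x → 0 ≤ Φ x) ∧
  Tendsto Φ atTop atTop

/-- The general mean-field system of intensities. -/
def IsGenSys (α : ℝ) (h₁ h₂ h₃ h₄ ΦA ΦB ΦBA ΦAB lA lB : ℝ → ℝ) : Prop :=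
  Continuous lA ∧ Continuous lB ∧ (∀ t, 0 ≤ lA t) ∧ (∀ t, 0 ≤ lB t) ∧
  (∀ t, 0 ≤ t →
    lA t = ΦA (α * convK h₁ lA t) * ΦBA ((1 - α) * convK h₂ lB t)) ∧
  (∀ t, 0 ≤ t →
    lB t = ΦB ((1 - α) * convK h₃ lB t) + ΦAB (α * convK h₄ lA t))

/-- The linear mean-field system: `Φ_A(x) = μ_A + x` and `Φ_B(x) = μ_B + x`. -/
def IsLinSys (α : ℝ) (h₁ h₂ h₃ h₄ ΦBA ΦAB : ℝ → ℝ) (μA μB : ℝ)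
    (lA lB : ℝ → ℝ) : Prop :=
  IsGenSys α h₁ h₂ h₃ h₄ (fun x => μA + x) (fun x => μB + x) ΦBA ΦAB lA lB

/-- `limsup_{t→∞} f(t)` with values in `[0,∞]`. -/
noncomputable def elimsup (f : ℝ → ℝ) : ℝ≥0∞ :=
  Filter.limsup (fun t => ENNReal.ofReal (f t)) Filter.atTop

/-- `liminf_{t→∞} f(t)` with values in `[0,∞]`. -/
noncomputable def eliminf (f : ℝ → ℝ) : ℝ≥0∞ :=
  Filter.liminf (fun t => ENNReal.ofReal (f t)) Filter.atTop

/-- The domain `I_{κ₁,κ₂} = {x ≥ 0 : κ₁ Φ_{B→A}(κ₂ x) < 1}`. -/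
def Idom (κ₁ κ₂ : ℝ) (ΦBA : ℝ → ℝ) : Set ℝ :=
  {x : ℝ | 0 ≤ x ∧ κ₁ * ΦBA (κ₂ * x) < 1}

/-- `Ψ₁(x) = μ_A Φ_{B→A}(κ₂x)/(1 - κ₁Φ_{B→A}(κ₂x))`. -/
noncomputable def Psi1 (μA κ₁ κ₂ : ℝ) (ΦBA : ℝ → ℝ) (x : ℝ) : ℝ :=
  μA * ΦBA (κ₂ * x) / (1 - κ₁ * ΦBA (κ₂ * x))

/-- `Ψ₂(x) = (μ_B + Φ_{A→B}(κ₄x))/(1-κ₃)`. -/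
noncomputable def Psi2 (μB κ₃ κ₄ : ℝ) (ΦAB : ℝ → ℝ) (x : ℝ) : ℝ :=
  (μB + ΦAB (κ₄ * x)) / (1 - κ₃)

/-- The fixed-point map `Φ = Ψ₂ ∘ Ψ₁`. -/
noncomputable def PhiMap (μA μB κ₁ κ₂ κ₃ κ₄ : ℝ) (ΦBA ΦAB : ℝ → ℝ) (x : ℝ) : ℝ :=
  Psi2 μB κ₃ κ₄ ΦAB (Psi1 μA κ₁ κ₂ ΦBA x)

/-- The set `U_Φ` of admissible pairs `(u,v)`. -/
def UPhi (μA μB κ₁ κ₂ κ₃ κ₄ : ℝ) (ΦBA ΦAB : ℝ → ℝ) (ℓ : ℝ) : Set (ℝ × ℝ) :=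
  {p : ℝ × ℝ | p.1 ∈ Idom κ₁ κ₂ ΦBA ∧ p.2 ∈ Idom κ₁ κ₂ ΦBA ∧
    PhiMap μA μB κ₁ κ₂ κ₃ κ₄ ΦBA ΦAB p.2 ≤ p.1 ∧ p.1 ≤ ℓ ∧ ℓ ≤ p.2 ∧
    p.2 ≤ PhiMap μA μB κ₁ κ₂ κ₃ κ₄ ΦBA ΦAB p.1 ∧ μB / (1 - κ₃) ≤ p.1}


set_option linter.unusedVariables false

namespace RenewalAux

variable {k lam : ℝ → ℝ}

variable {k lam : ℝ → ℝ}

lemma K_nonneg (hpos : ∀ u, 0 ≤ u → 0 ≤ k u) : 0 ≤ ∫ s in Set.Ioi (0:ℝ), k s :=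
  setIntegral_nonneg measurableSet_Ioi fun x hx => hpos x (le_of_lt hx)

lemma kii (hint : IntegrableOn k (Set.Ioi 0)) {a b : ℝ} (ha : 0 ≤ a) (hab : a ≤ b) :
    IntervalIntegrable k volume a b := by
  rw [intervalIntegrable_iff_integrableOn_Ioc_of_le hab]
  exact hint.mono_set (fun x hx => lt_of_le_of_lt ha hx.1)

lemma I_nonneg (hpos : ∀ u, 0 ≤ u → 0 ≤ k u) {a : ℝ} (ha : 0 ≤ a) :
    0 ≤ ∫ s in (0:ℝ)..a, k s :=
  intervalIntegral.integral_nonneg ha (fun u hu => hpos u hu.1)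

lemma I_le_K (hpos : ∀ u, 0 ≤ u → 0 ≤ k u) (hint : IntegrableOn k (Set.Ioi 0))
    {a : ℝ} (ha : 0 ≤ a) :
    ∫ s in (0:ℝ)..a, k s ≤ ∫ s in Set.Ioi (0:ℝ), k s := by
  rw [intervalIntegral.integral_of_le ha]
  refine setIntegral_mono_set hint ?_ (HasSubset.Subset.eventuallyLE ?_)
  · exact (ae_restrict_iff' measurableSet_Ioi).2 (ae_of_all _ fun x hx => hpos x hx.le)
  · exact fun x hx => hx.1

lemma kci (hint : IntegrableOn k (Set.Ioi 0)) {t a b : ℝ}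
    (ha : 0 ≤ a) (hab : a ≤ b) (hbt : b ≤ t) :
    IntervalIntegrable (fun u => k (t - u)) volume a b := by
  have h1 : IntervalIntegrable k volume (t - b) (t - a) :=
    kii hint (by linarith) (by linarith)
  have h2 := h1.symm.comp_sub_left t
  simpa [sub_sub_cancel] using h2

lemma prodi (hint : IntegrableOn k (Set.Ioi 0)) (hcont : Continuous lam)
    {t a b : ℝ} (ha : 0 ≤ a) (hab : a ≤ b) (hbt : b ≤ t) :
    IntervalIntegrable (fun u => k (t - u) * lam u) volume a b :=
  (kci hint ha hab hbt).mul_continuousOn hcont.continuousOn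

lemma conv_le (hpos : ∀ u, 0 ≤ u → 0 ≤ k u) (hint : IntegrableOn k (Set.Ioi 0))
    (hcont : Continuous lam) {t a b B : ℝ}
    (ha : 0 ≤ a) (hab : a ≤ b) (hbt : b ≤ t)
    (hB : ∀ u ∈ Set.Icc a b, lam u ≤ B) :
    ∫ u in a..b, k (t - u) * lam u ≤ B * ∫ s in (t - b)..(t - a), k s := by
  have h1 : ∫ u in a..b, k (t - u) * lam u ≤ ∫ u in a..b, k (t - u) * B := by
    refine intervalIntegral.integral_mono_on hab (prodi hint hcont ha hab hbt)
      ((kci hint ha hab hbt).mul_const B) (fun u hu => ?_)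
    exact mul_le_mul_of_nonneg_left (hB u hu) (hpos _ (by linarith [hu.2]))
  refine h1.trans (le_of_eq ?_)
  rw [intervalIntegral.integral_mul_const, intervalIntegral.integral_comp_sub_left k t,
    mul_comm]

lemma conv_ge (hpos : ∀ u, 0 ≤ u → 0 ≤ k u) (hint : IntegrableOn k (Set.Ioi 0))
    (hcont : Continuous lam) {t a b m : ℝ}
    (ha : 0 ≤ a) (hab : a ≤ b) (hbt : b ≤ t)
    (hm : ∀ u ∈ Set.Icc a b, m ≤ lam u) :
    m * ∫ s in (t - b)..(t - a), k s ≤ ∫ u in a..b, k (t - u) * lam u := by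
  have h1 : ∫ u in a..b, k (t - u) * m ≤ ∫ u in a..b, k (t - u) * lam u := by
    refine intervalIntegral.integral_mono_on hab ((kci hint ha hab hbt).mul_const m)
      (prodi hint hcont ha hab hbt) (fun u hu => ?_)
    exact mul_le_mul_of_nonneg_left (hm u hu) (hpos _ (by linarith [hu.2]))
  refine le_trans (le_of_eq ?_) h1
  rw [intervalIntegral.integral_mul_const, intervalIntegral.integral_comp_sub_left k t,
    mul_comm]

lemma conv_split (hint : IntegrableOn k (Set.Ioi 0)) (hcont : Continuous lam)
    {t A : ℝ} (hA : 0 ≤ A) (hAt : A ≤ t) :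
    ∫ u in (0:ℝ)..t, k (t - u) * lam u
      = (∫ u in (0:ℝ)..(t - A), k (t - u) * lam u)
        + ∫ u in (t - A)..t, k (t - u) * lam u :=
  (intervalIntegral.integral_add_adjacent_intervals
    (prodi hint hcont le_rfl (by linarith) (by linarith))
    (prodi hint hcont (by linarith) (by linarith) le_rfl)).symm

lemma global_bound (hpos : ∀ u, 0 ≤ u → 0 ≤ k u) (hint : IntegrableOn k (Set.Ioi 0))
    (hcont : Continuous lam) (hnn : ∀ t, 0 ≤ lam t) {L c : ℝ}
    (hL : 0 ≤ L) (hc : 0 ≤ c) (hsub : L * ∫ s in Set.Ioi (0:ℝ), k s < 1)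
    (hineq : ∀ t, 0 ≤ t → lam t ≤ c + L * ∫ u in (0:ℝ)..t, k (t - u) * lam u) :
    ∀ t, 0 ≤ t → lam t ≤ c / (1 - L * ∫ s in Set.Ioi (0:ℝ), k s) := by
  intro t ht
  set K := ∫ s in Set.Ioi (0:ℝ), k s with hKdef
  have hK0 : 0 ≤ K := K_nonneg hpos
  have h1 : (0:ℝ) < 1 - L * K := by linarith
  obtain ⟨t₀, ht₀mem, ht₀max⟩ := (isCompact_Icc (a := (0:ℝ)) (b := t)).exists_isMaxOn
    ⟨0, by simp [ht]⟩ hcont.continuousOn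
  set M := lam t₀ with hMdef
  have hM0 : 0 ≤ M := hnn t₀
  have hMt : lam t ≤ M := ht₀max ⟨ht, le_rfl⟩
  have hI0 : 0 ≤ ∫ s in (0:ℝ)..t₀, k s := I_nonneg hpos ht₀mem.1
  have hIK : ∫ s in (0:ℝ)..t₀, k s ≤ K := I_le_K hpos hint ht₀mem.1
  have hconv : ∫ u in (0:ℝ)..t₀, k (t₀ - u) * lam u ≤ M * ∫ s in (0:ℝ)..t₀, k s := by
    have h2 := conv_le hpos hint hcont (t := t₀) le_rfl ht₀mem.1 le_rfl
      (fun u hu => ht₀max ⟨hu.1, hu.2.trans ht₀mem.2⟩)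
    simpa using h2
  have hM : M ≤ c + L * (M * K) := by
    have h2 := hineq t₀ ht₀mem.1
    nlinarith [mul_le_mul_of_nonneg_left hconv hL, mul_le_mul_of_nonneg_left hIK hM0]
  have : M ≤ c / (1 - L * K) := by
    rw [le_div_iff₀ h1]; nlinarith
  exact hMt.trans this

lemma lower_step (hpos : ∀ u, 0 ≤ u → 0 ≤ k u) (hint : IntegrableOn k (Set.Ioi 0))
    (hcont : Continuous lam) (hnn : ∀ t, 0 ≤ lam t) {μ : ℝ}
    (heq : ∀ t, 0 ≤ t → lam t = μ + ∫ u in (0:ℝ)..t, k (t - u) * lam u)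
    {A t m : ℝ} (hA : 0 ≤ A) (hAt : A ≤ t)
    (hmlow : ∀ u ∈ Set.Icc (t - A) t, m ≤ lam u) :
    μ + m * ∫ s in (0:ℝ)..A, k s ≤ lam t := by
  have ht : 0 ≤ t := le_trans hA hAt
  rw [heq t ht, conv_split hint hcont hA hAt]
  have h1 : 0 ≤ ∫ u in (0:ℝ)..(t - A), k (t - u) * lam u :=
    intervalIntegral.integral_nonneg (by linarith)
      (fun u hu => mul_nonneg (hpos _ (by linarith [hu.2])) (hnn u))
  have h2 := conv_ge hpos hint hcont (t := t) (a := t - A) (b := t)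
    (by linarith) (by linarith) le_rfl hmlow
  rw [sub_self, sub_sub_cancel] at h2
  linarith


lemma renewal_tendsto (hpos : ∀ u, 0 ≤ u → 0 ≤ k u) (hint : IntegrableOn k (Set.Ioi 0))
    (hcont : Continuous lam) (hnn : ∀ t, 0 ≤ lam t) {μ : ℝ} (hμ : 0 ≤ μ)
    (hK : (∫ s in Set.Ioi (0:ℝ), k s) < 1)
    (heq : ∀ t, 0 ≤ t → lam t = μ + ∫ u in (0:ℝ)..t, k (t - u) * lam u) :
    Tendsto lam atTop (𝓝 (μ / (1 - ∫ s in Set.Ioi (0:ℝ), k s))) := by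
  set K := ∫ s in Set.Ioi (0:ℝ), k s with hKdef
  have hK0 : 0 ≤ K := K_nonneg hpos
  have h1K : (0:ℝ) < 1 - K := by linarith
  set p := μ / (1 - K) with hpdef
  have hp0 : 0 ≤ p := div_nonneg hμ h1K.le
  have hub : ∀ t, 0 ≤ t → lam t ≤ p := by
    have h2 := global_bound hpos hint hcont hnn (L := 1) (c := μ) zero_le_one hμ
      (by simpa using hK) (fun t ht => by rw [one_mul]; exact le_of_eq (heq t ht))
    simpa [hpdef] using h2
  have key : ∀ ε > (0:ℝ), ∃ N : ℝ, ∀ t ≥ N, p - ε ≤ lam t := by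
    intro ε hε
    have htend : Tendsto (fun A => ∫ s in (0:ℝ)..A, k s) atTop (𝓝 K) :=
      intervalIntegral_tendsto_integral_Ioi 0 hint tendsto_id
    have htendq : Tendsto (fun A => μ / (1 - ∫ s in (0:ℝ)..A, k s)) atTop (𝓝 p) := by
      rw [hpdef]
      exact tendsto_const_nhds.div (tendsto_const_nhds.sub htend) (by linarith)
    obtain ⟨A, hA0, hqA⟩ : ∃ A : ℝ, 0 ≤ A ∧
        p - ε / 2 < μ / (1 - ∫ s in (0:ℝ)..A, k s) := by
      have h3 := (htendq.eventually (eventually_gt_nhds (by linarith : p - ε / 2 < p))).and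
        (eventually_ge_atTop (0:ℝ))
      obtain ⟨A, h4, h5⟩ := h3.exists
      exact ⟨A, h5, h4⟩
    set IA := ∫ s in (0:ℝ)..A, k s with hIAdef
    have hIA0 : 0 ≤ IA := I_nonneg hpos hA0
    have hIAK : IA ≤ K := I_le_K hpos hint hA0
    have hIA1 : IA < 1 := lt_of_le_of_lt hIAK hK
    set q := μ / (1 - IA) with hqdef
    have hq0 : 0 ≤ q := div_nonneg hμ (by linarith)
    have h1IA : (0:ℝ) < 1 - IA := by linarith
    have hμq : μ = q * (1 - IA) := by rw [hqdef, div_mul_cancel₀ _ h1IA.ne']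
    have claim : ∀ n : ℕ, ∀ t, (n : ℝ) * A ≤ t → q * (1 - IA ^ n) ≤ lam t := by
      intro n
      induction n with
      | zero => intro t ht; simpa using hnn t
      | succ n ih =>
        intro t ht
        have hn0 : (0:ℝ) ≤ n := Nat.cast_nonneg n
        push_cast at ht
        have hAt : A ≤ t := by nlinarith
        have hstep := lower_step hpos hint hcont hnn heq hA0 hAt
          (m := q * (1 - IA ^ n)) (fun u hu => ih u (by nlinarith [hu.1]))
        rw [← hIAdef] at hstep
        have he : μ + q * (1 - IA ^ n) * IA = q * (1 - IA ^ (n + 1)) := by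
          rw [hμq]; ring
        push_cast
        linarith [hstep]
    obtain ⟨n, hn⟩ : ∃ n : ℕ, q * K ^ n < ε / 2 := by
      have h6 : Tendsto (fun n : ℕ => q * K ^ n) atTop (𝓝 0) := by
        simpa using (tendsto_pow_atTop_nhds_zero_of_lt_one hK0 hK).const_mul q
      exact (h6.eventually (eventually_lt_nhds (by linarith : (0:ℝ) < ε / 2))).exists
    refine ⟨(n : ℝ) * A, fun t htN => ?_⟩
    have h7 := claim n t htN
    have h8 : IA ^ n ≤ K ^ n := pow_le_pow_left₀ hIA0 hIAK n
    have h9 : q * IA ^ n ≤ q * K ^ n := mul_le_mul_of_nonneg_left h8 hq0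
    nlinarith
  rw [Metric.tendsto_atTop]
  intro ε hε
  obtain ⟨N, hN⟩ := key (ε / 2) (by linarith)
  refine ⟨max N 0, fun t ht => ?_⟩
  have h1 := hN t (le_trans (le_max_left _ _) ht)
  have h2 := hub t (le_trans (le_max_right _ _) ht)
  rw [Real.dist_eq, abs_lt]
  constructor <;> linarith

lemma renewal_div (hpos : ∀ u, 0 ≤ u → 0 ≤ k u) (hint : IntegrableOn k (Set.Ioi 0))
    (hcont : Continuous lam) (hnn : ∀ t, 0 ≤ lam t) {μ : ℝ} (hμ : 0 < μ)
    (hK : 1 < ∫ s in Set.Ioi (0:ℝ), k s)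
    (heq : ∀ t, 0 ≤ t → lam t = μ + ∫ u in (0:ℝ)..t, k (t - u) * lam u) :
    Tendsto lam atTop atTop := by
  have htend : Tendsto (fun A => ∫ s in (0:ℝ)..A, k s) atTop (𝓝 (∫ s in Set.Ioi (0:ℝ), k s)) :=
    intervalIntegral_tendsto_integral_Ioi 0 hint tendsto_id
  obtain ⟨A, hA0, hIA⟩ : ∃ A : ℝ, 0 ≤ A ∧ 1 < ∫ s in (0:ℝ)..A, k s := by
    have h3 := (htend.eventually (eventually_gt_nhds hK)).and (eventually_ge_atTop (0:ℝ))
    obtain ⟨A, h4, h5⟩ := h3.exists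
    exact ⟨A, h5, h4⟩
  set IA := ∫ s in (0:ℝ)..A, k s with hIAdef
  have base : ∀ t, 0 ≤ t → μ ≤ lam t := by
    intro t ht
    rw [heq t ht]
    have h1 : 0 ≤ ∫ u in (0:ℝ)..t, k (t - u) * lam u :=
      intervalIntegral.integral_nonneg ht
        (fun u hu => mul_nonneg (hpos _ (by linarith [hu.2])) (hnn u))
    linarith
  have claim : ∀ n : ℕ, ∀ t, (n : ℝ) * A ≤ t → ((n : ℝ) + 1) * μ ≤ lam t := by
    intro n
    induction n with
    | zero => intro t ht; simpa using base t (by simpa using ht)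
    | succ n ih =>
      intro t ht
      have hn0 : (0:ℝ) ≤ n := Nat.cast_nonneg n
      push_cast at ht
      have hAt : A ≤ t := by nlinarith
      have hstep := lower_step hpos hint hcont hnn heq hA0 hAt
        (m := ((n : ℝ) + 1) * μ) (fun u hu => ih u (by nlinarith [hu.1]))
      rw [← hIAdef] at hstep
      push_cast
      nlinarith [hstep, mul_pos (by linarith : (0:ℝ) < (n:ℝ) + 1) hμ]
  rw [tendsto_atTop]
  intro b
  obtain ⟨n, hn⟩ := exists_nat_ge (b / μ)
  filter_upwards [eventually_ge_atTop ((n : ℝ) * A)] with t ht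
  have h1 := claim n t ht
  have h2 : b ≤ (n : ℝ) * μ := by
    rw [div_le_iff₀ hμ] at hn; linarith
  nlinarith

lemma conv_zero {h : ℝ → ℝ} (hm : Measurable h) (hpos : ∀ u, 0 ≤ u → 0 ≤ h u)
    (hint : IntegrableOn h (Set.Ioi 0)) (hz : ∫ s in Set.Ioi (0:ℝ), h s = 0)
    (f : ℝ → ℝ) {t : ℝ} (ht : 0 ≤ t) : (∫ u in (0:ℝ)..t, h (t - u) * f u) = 0 := by
  have hnn : 0 ≤ᵐ[volume.restrict (Set.Ioi (0:ℝ))] h :=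
    (ae_restrict_iff' measurableSet_Ioi).2 (ae_of_all _ fun x hx => hpos x hx.le)
  have hae : h =ᵐ[volume.restrict (Set.Ioi (0:ℝ))] 0 :=
    (integral_eq_zero_iff_of_nonneg_ae hnn hint).1 hz
  have hae' : ∀ᵐ s : ℝ, s ∈ Set.Ioi (0:ℝ) → h s = 0 := by
    have := (ae_restrict_iff' measurableSet_Ioi).1 (hae.mono fun x hx => hx)
    simpa using this
  have hmp : MeasurePreserving (fun u : ℝ => t - u) volume volume :=
    Measure.measurePreserving_sub_left volume t
  have hae2 : ∀ᵐ u : ℝ, t - u ∈ Set.Ioi (0:ℝ) → h (t - u) = 0 :=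
    hmp.quasiMeasurePreserving.ae hae'
  have hone : ∀ᵐ u : ℝ, u ≠ t := by
    exact compl_mem_ae_iff.mpr (measure_singleton (μ := (volume : Measure ℝ)) t)
  rw [intervalIntegral.integral_of_le ht]
  calc (∫ u in Set.Ioc 0 t, h (t - u) * f u)
      = ∫ u in Set.Ioc 0 t, (0:ℝ) := by
        refine setIntegral_congr_ae measurableSet_Ioc ?_
        filter_upwards [hae2, hone] with u h2 hne hu
        rw [h2 (by simp only [Set.mem_Ioi]; cases lt_or_eq_of_le hu.2 with
          | inl h => linarith
          | inr h => exact absurd h hne), zero_mul]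
    _ = 0 := by simp

end RenewalAux

set_option linter.unusedVariables true

/-- Fully decoupled case `κ₂ = κ₄ = 0`: subcriticality criteria for the general
system and explicit limits / divergence for the linear system. -/
theorem stmt2
    (α : ℝ) (hα : α ∈ Set.Ioo (0:ℝ) 1)
    (h₁ h₂ h₃ h₄ : ℝ → ℝ)
    (hh₁ : KernelOK h₁) (hh₂ : KernelOK h₂) (hh₃ : KernelOK h₃) (hh₄ : KernelOK h₄)
    (κ₁ κ₂ κ₃ κ₄ : ℝ)
    (hκ₁ : κ₁ = α * l1 h₁) (hκ₂ : κ₂ = (1 - α) * l1 h₂)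
    (hκ₃ : κ₃ = (1 - α) * l1 h₃) (hκ₄ : κ₄ = α * l1 h₄)
    (ΦBA ΦAB : ℝ → ℝ) (hBA : InhibOK ΦBA) (hAB : FeedOK ΦAB)
    (ΦA ΦB : ℝ → ℝ) (LA LB : ℝ) (hLA : 0 ≤ LA) (hLB : 0 ≤ LB)
    (hΦApos : ∀ x, 0 ≤ x → 0 ≤ ΦA x) (hΦBpos : ∀ x, 0 ≤ x → 0 ≤ ΦB x)
    (hΦAlip : ∀ x y, 0 ≤ x → 0 ≤ y → |ΦA x - ΦA y| ≤ LA * |x - y|)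
    (hΦBlip : ∀ x y, 0 ≤ x → 0 ≤ y → |ΦB x - ΦB y| ≤ LB * |x - y|)
    (μA μB : ℝ) (hμA : 0 ≤ μA) (hμB : 0 ≤ μB)
    (hk2 : κ₂ = 0) (hk4 : κ₄ = 0) :
    ((LA * κ₁ < 1 → ∀ lA lB, IsGenSys α h₁ h₂ h₃ h₄ ΦA ΦB ΦBA ΦAB lA lB →
        BddAbove (lA '' Set.Ici 0)) ∧
     (LB * κ₃ < 1 → ∀ lA lB, IsGenSys α h₁ h₂ h₃ h₄ ΦA ΦB ΦBA ΦAB lA lB →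
        BddAbove (lB '' Set.Ici 0))) ∧
    (∀ lA lB, IsLinSys α h₁ h₂ h₃ h₄ ΦBA ΦAB μA μB lA lB →
      (κ₁ < 1 → Tendsto lA atTop (𝓝 (μA / (1 - κ₁)))) ∧
      (κ₃ < 1 → Tendsto lB atTop (𝓝 (μB / (1 - κ₃)))) ∧
      (1 < κ₁ → 0 < μA → Tendsto lA atTop atTop) ∧
      (1 < κ₃ → 0 < μB → Tendsto lB atTop atTop)) := by
  obtain ⟨hα0, hα1⟩ := hα
  obtain ⟨⟨hm1, hp1, hi1⟩, -⟩ := hh₁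
  obtain ⟨⟨hm2, hp2, hi2⟩, -⟩ := hh₂
  obtain ⟨⟨hm3, hp3, hi3⟩, -⟩ := hh₃
  obtain ⟨⟨hm4, hp4, hi4⟩, -⟩ := hh₄
  have h1α : (0:ℝ) < 1 - α := by linarith
  have hz2 : ∫ s in Set.Ioi (0:ℝ), h₂ s = 0 := by
    have h5 : (1 - α) * l1 h₂ = 0 := by rw [← hκ₂]; exact hk2
    have h6 := (mul_eq_zero.1 h5).resolve_left (ne_of_gt h1α)
    rw [l1] at h6; exact h6
  have hz4 : ∫ s in Set.Ioi (0:ℝ), h₄ s = 0 := by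
    have h5 : α * l1 h₄ = 0 := by rw [← hκ₄]; exact hk4
    have h6 := (mul_eq_zero.1 h5).resolve_left (ne_of_gt hα0)
    rw [l1] at h6; exact h6
  have hBA0 : ΦBA 0 = 1 := hBA.2.2.1
  have hAB0 : ΦAB 0 = 0 := hAB.2.2.1
  have hp1' : ∀ u, 0 ≤ u → 0 ≤ α * h₁ u := fun u hu => mul_nonneg hα0.le (hp1 u hu)
  have hi1' : IntegrableOn (fun s => α * h₁ s) (Set.Ioi 0) := hi1.const_mul α
  have hK1 : (∫ s in Set.Ioi (0:ℝ), α * h₁ s) = κ₁ := by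
    rw [hκ₁, l1, integral_const_mul]
  have hp3' : ∀ u, 0 ≤ u → 0 ≤ (1 - α) * h₃ u := fun u hu => mul_nonneg h1α.le (hp3 u hu)
  have hi3' : IntegrableOn (fun s => (1 - α) * h₃ s) (Set.Ioi 0) := hi3.const_mul (1 - α)
  have hK3 : (∫ s in Set.Ioi (0:ℝ), (1 - α) * h₃ s) = κ₃ := by
    rw [hκ₃, l1, integral_const_mul]
  have hconv2 : ∀ (f : ℝ → ℝ) (t : ℝ), 0 ≤ t → convK h₂ f t = 0 :=
    fun f t ht => RenewalAux.conv_zero hm2 hp2 hi2 hz2 f ht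
  have hconv4 : ∀ (f : ℝ → ℝ) (t : ℝ), 0 ≤ t → convK h₄ f t = 0 :=
    fun f t ht => RenewalAux.conv_zero hm4 hp4 hi4 hz4 f ht
  have hscale : ∀ (c : ℝ) (h f : ℝ → ℝ) (t : ℝ),
      (∫ u in (0:ℝ)..t, (c * h (t - u)) * f u) = c * convK h f t := by
    intro c h f t
    rw [convK, ← intervalIntegral.integral_const_mul]
    simp only [mul_assoc]
  have hconvnn : ∀ (h f : ℝ → ℝ), (∀ u, 0 ≤ u → 0 ≤ h u) → (∀ u, 0 ≤ f u) →
      ∀ t, 0 ≤ t → 0 ≤ convK h f t := by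
    intro h f hh hf t ht
    exact intervalIntegral.integral_nonneg ht
      (fun u hu => mul_nonneg (hh _ (by linarith [hu.1, hu.2])) (hf u))
  refine ⟨⟨?_, ?_⟩, ?_⟩
  · -- general system, A population
    intro hsub lA lB hsys
    obtain ⟨hcA, hcB, hA0, hB0, hAeq, hBeq⟩ := hsys
    have hineq : ∀ t, 0 ≤ t →
        lA t ≤ ΦA 0 + LA * ∫ u in (0:ℝ)..t, (α * h₁ (t - u)) * lA u := by
      intro t ht
      have hx0 : 0 ≤ α * convK h₁ lA t := mul_nonneg hα0.le (hconvnn h₁ lA hp1 hA0 t ht)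
      have hlip := hΦAlip (α * convK h₁ lA t) 0 hx0 le_rfl
      rw [sub_zero, abs_of_nonneg hx0] at hlip
      have h5 : ΦA (α * convK h₁ lA t) - ΦA 0 ≤ LA * (α * convK h₁ lA t) :=
        (le_abs_self _).trans hlip
      rw [hAeq t ht, hconv2 lB t ht, mul_zero, hBA0, mul_one, hscale α h₁ lA t]
      linarith
    have hb := RenewalAux.global_bound (k := fun s => α * h₁ s) hp1' hi1' hcA hA0
      hLA (hΦApos 0 le_rfl) (by rwa [hK1]) hineq
    refine ⟨ΦA 0 / (1 - LA * ∫ s in Set.Ioi (0:ℝ), α * h₁ s), ?_⟩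
    rintro y ⟨x, hx, rfl⟩
    exact hb x hx
  · -- general system, B population
    intro hsub lA lB hsys
    obtain ⟨hcA, hcB, hA0, hB0, hAeq, hBeq⟩ := hsys
    have hineq : ∀ t, 0 ≤ t →
        lB t ≤ ΦB 0 + LB * ∫ u in (0:ℝ)..t, ((1 - α) * h₃ (t - u)) * lB u := by
      intro t ht
      have hx0 : 0 ≤ (1 - α) * convK h₃ lB t :=
        mul_nonneg h1α.le (hconvnn h₃ lB hp3 hB0 t ht)
      have hlip := hΦBlip ((1 - α) * convK h₃ lB t) 0 hx0 le_rfl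
      rw [sub_zero, abs_of_nonneg hx0] at hlip
      have h5 : ΦB ((1 - α) * convK h₃ lB t) - ΦB 0 ≤ LB * ((1 - α) * convK h₃ lB t) :=
        (le_abs_self _).trans hlip
      rw [hBeq t ht, hconv4 lA t ht, mul_zero, hAB0, add_zero, hscale (1 - α) h₃ lB t]
      linarith
    have hb := RenewalAux.global_bound (k := fun s => (1 - α) * h₃ s) hp3' hi3' hcB hB0
      hLB (hΦBpos 0 le_rfl) (by rwa [hK3]) hineq
    refine ⟨ΦB 0 / (1 - LB * ∫ s in Set.Ioi (0:ℝ), (1 - α) * h₃ s), ?_⟩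
    rintro y ⟨x, hx, rfl⟩
    exact hb x hx
  · -- linear system
    intro lA lB hsys
    obtain ⟨hcA, hcB, hA0, hB0, hAeq, hBeq⟩ := hsys
    have heqA : ∀ t, 0 ≤ t →
        lA t = μA + ∫ u in (0:ℝ)..t, (α * h₁ (t - u)) * lA u := by
      intro t ht
      rw [hscale α h₁ lA t]
      have h6 := hAeq t ht
      rw [hconv2 lB t ht, mul_zero, hBA0, mul_one] at h6
      exact h6
    have heqB : ∀ t, 0 ≤ t →
        lB t = μB + ∫ u in (0:ℝ)..t, ((1 - α) * h₃ (t - u)) * lB u := by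
      intro t ht
      rw [hscale (1 - α) h₃ lB t]
      have h6 := hBeq t ht
      rw [hconv4 lA t ht, mul_zero, hAB0, add_zero] at h6
      exact h6
    refine ⟨?_, ?_, ?_, ?_⟩
    · intro h1
      have h7 := RenewalAux.renewal_tendsto (k := fun s => α * h₁ s) hp1' hi1' hcA hA0
        hμA (by rwa [hK1]) heqA
      rwa [hK1] at h7
    · intro h1
      have h7 := RenewalAux.renewal_tendsto (k := fun s => (1 - α) * h₃ s) hp3' hi3' hcB hB0
        hμB (by rwa [hK3]) heqB
      rwa [hK3] at h7
    · intro h1 h2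
      exact RenewalAux.renewal_div (k := fun s => α * h₁ s) hp1' hi1' hcA hA0
        h2 (by rwa [hK1]) heqA
    · intro h1 h2
      exact RenewalAux.renewal_div (k := fun s => (1 - α) * h₃ s) hp3' hi3' hcB hB0
        h2 (by rwa [hK3]) heqB
end

section
/- Suppose κ₂ = 0 and κ₄ > 0 (retroaction without inhibition). Then for the general mean-field system: if ‖Φ_A‖_L · κ₁ < 1, then sup_{t≥0} λ^A(t) < ∞. Moreover, for the linear mean-field system: (1) if κ₁ < 1, then λ^A(t) → μ_A/(1−κ₁) as t → ∞, and furthermore (a) if κ₃ < 1 then λ^B(t) → μ_B/(1−κ₃) + Φ_{A→B}(κ₄μ_A/(1−κ₁))/(1−κ₃) as t → ∞, while (b) if κ₃ > 1 and μ_B > 0 then λ^B(t) → +∞ as t → ∞; (2) if κ₁ > 1 and μ_A > 0, then both λ^A(t) → +∞ and λ^B(t) → +∞ as t → ∞. -/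
open MeasureTheory Filter Topology Set
open scoped ENNReal

set_option maxHeartbeats 1000000


namespace Aux

variable {h f : ℝ → ℝ}

lemma l1_nonneg (hk : KernelL1 h) : 0 ≤ l1 h :=
  setIntegral_nonneg measurableSet_Ioi fun x hx => hk.2.1 x hx.le

lemma h_II (hk : KernelL1 h) {a b : ℝ} (ha : 0 ≤ a) (hab : a ≤ b) :
    IntervalIntegrable h volume a b := by
  rw [intervalIntegrable_iff_integrableOn_Ioc_of_le hab]
  exact hk.2.2.mono_set fun x hx => lt_of_le_of_lt ha hx.1

lemma hsub_II (hk : KernelL1 h) {t a b : ℝ} (ht : 0 ≤ t)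
    (hab : uIcc a b ⊆ uIcc 0 t) :
    IntervalIntegrable (fun u => h (t - u)) volume a b := by
  have h0 : IntervalIntegrable (fun u => h (t - u)) volume (t - 0) (t - t) :=
    (h_II hk le_rfl ht).comp_sub_left t
  have h1 : IntervalIntegrable (fun u => h (t - u)) volume 0 t := by
    simpa using h0.symm
  exact h1.mono_set (by simpa using hab)

lemma integrand_II (hk : KernelL1 h) (hf : Continuous f) {t a b : ℝ} (ht : 0 ≤ t)
    (hab : uIcc a b ⊆ uIcc 0 t) :
    IntervalIntegrable (fun u => h (t - u) * f u) volume a b :=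
  (hsub_II hk ht hab).mul_continuousOn hf.continuousOn

lemma int0T_nonneg (hk : KernelL1 h) {T : ℝ} (hT : 0 ≤ T) :
    0 ≤ ∫ u in (0:ℝ)..T, h u :=
  intervalIntegral.integral_nonneg hT fun u hu => hk.2.1 u hu.1

lemma int0T_le_l1 (hk : KernelL1 h) {T : ℝ} (hT : 0 ≤ T) :
    ∫ u in (0:ℝ)..T, h u ≤ l1 h := by
  rw [intervalIntegral.integral_of_le hT]
  exact setIntegral_mono_set hk.2.2
    ((ae_restrict_iff' measurableSet_Ioi).2 (ae_of_all _ fun x hx => hk.2.1 x hx.le))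
    (HasSubset.Subset.eventuallyLE Ioc_subset_Ioi_self)

lemma int0T_tendsto (hk : KernelL1 h) :
    Tendsto (fun T => ∫ u in (0:ℝ)..T, h u) atTop (𝓝 (l1 h)) :=
  intervalIntegral_tendsto_integral_Ioi 0 hk.2.2 tendsto_id

lemma int_sub_eq (t a b : ℝ) :
    ∫ u in a..b, h (t - u) = ∫ u in (t-b)..(t-a), h u :=
  intervalIntegral.integral_comp_sub_left h t

lemma convK_nonneg (hk : KernelL1 h) {t : ℝ} (ht : 0 ≤ t) (hf0 : ∀ u, 0 ≤ f u) :
    0 ≤ convK h f t :=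
  intervalIntegral.integral_nonneg ht fun u hu =>
    mul_nonneg (hk.2.1 _ (by linarith [hu.2])) (hf0 u)

lemma convK_le (hk : KernelL1 h) (hf : Continuous f) {t M : ℝ} (ht : 0 ≤ t)
    (hM : 0 ≤ M) (hfM : ∀ u ∈ Icc 0 t, f u ≤ M) :
    convK h f t ≤ M * l1 h := by
  have step1 : convK h f t ≤ ∫ u in (0:ℝ)..t, h (t - u) * M := by
    apply intervalIntegral.integral_mono_on ht
      (integrand_II hk hf ht (by simp)) ((hsub_II hk ht (by simp)).mul_const M)
    intro x hx
    exact mul_le_mul_of_nonneg_left (hfM x hx) (hk.2.1 _ (by linarith [hx.2]))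
  have step2 : ∫ u in (0:ℝ)..t, h (t - u) * M = (∫ u in (0:ℝ)..t, h u) * M := by
    rw [intervalIntegral.integral_mul_const, int_sub_eq]
    simp
  calc convK h f t ≤ (∫ u in (0:ℝ)..t, h u) * M := by rw [← step2]; exact step1
    _ ≤ l1 h * M := mul_le_mul_of_nonneg_right (int0T_le_l1 hk ht) hM
    _ = M * l1 h := mul_comm _ _

lemma convK_split_lower (hk : KernelL1 h) (hf : Continuous f) {t T m : ℝ}
    (hT : 0 ≤ T) (hTt : T ≤ t) (hf0 : ∀ u, 0 ≤ f u) (hm : 0 ≤ m)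
    (hfm : ∀ u ∈ Icc (t - T) t, m ≤ f u) :
    m * ∫ u in (0:ℝ)..T, h u ≤ convK h f t := by
  have ht : (0:ℝ) ≤ t := le_trans hT hTt
  have hsub1 : uIcc (0:ℝ) (t - T) ⊆ uIcc 0 t := by
    rw [uIcc_of_le (by linarith), uIcc_of_le ht]
    exact Icc_subset_Icc le_rfl (by linarith)
  have hsub2 : uIcc (t - T) t ⊆ uIcc 0 t := by
    rw [uIcc_of_le (by linarith), uIcc_of_le ht]
    exact Icc_subset_Icc (by linarith) le_rfl
  have hI1 := integrand_II hk hf ht hsub1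
  have hI2 := integrand_II hk hf ht hsub2
  have hadd := intervalIntegral.integral_add_adjacent_intervals hI1 hI2
  have h1 : (0:ℝ) ≤ ∫ u in (0:ℝ)..(t - T), h (t - u) * f u :=
    intervalIntegral.integral_nonneg (by linarith) fun u hu =>
      mul_nonneg (hk.2.1 _ (by linarith [hu.2])) (hf0 u)
  have h2 : m * ∫ u in (0:ℝ)..T, h u ≤ ∫ u in (t-T)..t, h (t - u) * f u := by
    have e1 : ∫ u in (t-T)..t, h (t - u) * m = (∫ u in (0:ℝ)..T, h u) * m := by
      rw [intervalIntegral.integral_mul_const, int_sub_eq]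
      norm_num
    have := intervalIntegral.integral_mono_on (show t - T ≤ t by linarith)
      ((hsub_II hk ht hsub2).mul_const m) hI2
      (fun x hx => mul_le_mul_of_nonneg_left (hfm x hx) (hk.2.1 _ (by linarith [hx.2])))
    rw [e1] at this
    linarith [this]
  unfold convK
  linarith [hadd, h1, h2]

lemma convK_split_upper (hk : KernelL1 h) (hf : Continuous f) {t T B m : ℝ}
    (hT : 0 ≤ T) (hTt : T ≤ t) (hB : 0 ≤ B)
    (hfB : ∀ u ∈ Icc 0 t, f u ≤ B) (hm : 0 ≤ m)
    (hfm : ∀ u ∈ Icc (t - T) t, f u ≤ m) :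
    convK h f t ≤ B * (l1 h - ∫ u in (0:ℝ)..T, h u) + m * l1 h := by
  have ht : (0:ℝ) ≤ t := le_trans hT hTt
  have hsub1 : uIcc (0:ℝ) (t - T) ⊆ uIcc 0 t := by
    rw [uIcc_of_le (by linarith), uIcc_of_le ht]
    exact Icc_subset_Icc le_rfl (by linarith)
  have hsub2 : uIcc (t - T) t ⊆ uIcc 0 t := by
    rw [uIcc_of_le (by linarith), uIcc_of_le ht]
    exact Icc_subset_Icc (by linarith) le_rfl
  have hI1 := integrand_II hk hf ht hsub1
  have hI2 := integrand_II hk hf ht hsub2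
  have hadd := intervalIntegral.integral_add_adjacent_intervals hI1 hI2
  have h1 : ∫ u in (0:ℝ)..(t - T), h (t - u) * f u
      ≤ B * (l1 h - ∫ u in (0:ℝ)..T, h u) := by
    have e1 : ∫ u in (0:ℝ)..(t-T), h (t - u) * B = (∫ u in T..t, h u) * B := by
      rw [intervalIntegral.integral_mul_const, int_sub_eq]
      norm_num
    have hmono := intervalIntegral.integral_mono_on (show (0:ℝ) ≤ t - T by linarith)
      hI1 ((hsub_II hk ht hsub1).mul_const B)
      (fun x hx => mul_le_mul_of_nonneg_left
        (hfB x ⟨hx.1, by linarith [hx.2]⟩) (hk.2.1 _ (by linarith [hx.2])))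
    rw [e1] at hmono
    have hTt' : ∫ u in T..t, h u = (∫ u in (0:ℝ)..t, h u) - ∫ u in (0:ℝ)..T, h u := by
      have := intervalIntegral.integral_add_adjacent_intervals
        (h_II hk le_rfl hT) (h_II hk hT hTt)
      linarith
    have h0t := int0T_le_l1 hk ht
    nlinarith [hmono]
  have h2 : ∫ u in (t-T)..t, h (t - u) * f u ≤ m * l1 h := by
    have e1 : ∫ u in (t-T)..t, h (t - u) * m = (∫ u in (0:ℝ)..T, h u) * m := by
      rw [intervalIntegral.integral_mul_const, int_sub_eq]
      norm_num
    have hmono := intervalIntegral.integral_mono_on (show t - T ≤ t by linarith)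
      hI2 ((hsub_II hk ht hsub2).mul_const m)
      (fun x hx => mul_le_mul_of_nonneg_left (hfm x hx) (hk.2.1 _ (by linarith [hx.2])))
    rw [e1] at hmono
    have := int0T_le_l1 hk ht
    nlinarith [int0T_le_l1 hk hT]
  unfold convK
  linarith [hadd]


/-- Gronwall-type boundedness. -/
lemma bdd_of_renewal (hk : KernelL1 h) (hf : Continuous f) {q M : ℝ}
    (hq : 0 ≤ q) (hκ : q * l1 h < 1) (hM : 0 ≤ M) (hf0 : ∀ u, 0 ≤ f u)
    (heq : ∀ t, 0 ≤ t → f t ≤ M + q * convK h f t) :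
    ∀ t, 0 ≤ t → f t ≤ M / (1 - q * l1 h) := by
  intro t₀ ht₀
  obtain ⟨ts, hts, hmax⟩ := (isCompact_Icc (a := (0:ℝ)) (b := t₀)).exists_isMaxOn
    (nonempty_Icc.2 ht₀) hf.continuousOn
  have hfts : f t₀ ≤ f ts := hmax ⟨ht₀, le_rfl⟩
  have h1 : f ts ≤ M + q * (f ts * l1 h) := by
    have hc : convK h f ts ≤ f ts * l1 h :=
      convK_le hk hf hts.1 (hf0 ts) (fun u hu => hmax ⟨hu.1, le_trans hu.2 hts.2⟩)
    have := heq ts hts.1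
    nlinarith
  have hpos : 0 < 1 - q * l1 h := by linarith
  rw [le_div_iff₀ hpos]
  nlinarith [hf0 ts]

/-- Renewal theorem, convergent case. -/
lemma tendsto_of_renewal (hk : KernelL1 h) (hf : Continuous f) {q c B : ℝ}
    {g : ℝ → ℝ}
    (hq : 0 ≤ q) (hκ : q * l1 h < 1) (hf0 : ∀ u, 0 ≤ f u)
    (hB : 0 ≤ B) (hfB : ∀ t, 0 ≤ t → f t ≤ B)
    (hg : Tendsto g atTop (𝓝 c))
    (heq : ∀ t, 0 ≤ t → f t = g t + q * convK h f t) :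
    Tendsto f atTop (𝓝 (c / (1 - q * l1 h))) := by
  have hbdd : IsBoundedUnder (· ≤ ·) atTop f :=
    ⟨B, eventually_map.2 (eventually_atTop.2 ⟨0, hfB⟩)⟩
  have hbdd' : IsBoundedUnder (· ≥ ·) atTop f :=
    ⟨0, eventually_map.2 (eventually_atTop.2 ⟨0, fun t _ => hf0 t⟩)⟩
  set ls := limsup f atTop with hls
  set li := liminf f atTop with hli
  have hli0 : 0 ≤ li := le_liminf_of_le hbdd.isCoboundedUnder_ge
    (eventually_atTop.2 ⟨0, fun t _ => hf0 t⟩)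
  have hl1 : 0 ≤ l1 h := l1_nonneg hk
  have hlils : li ≤ ls := liminf_le_limsup hbdd hbdd'
  have hls0 : 0 ≤ ls := le_trans hli0 hlils
  have hpos : 0 < 1 - q * l1 h := by linarith
  have key : ∀ ε : ℝ, 0 < ε →
      ls ≤ c + q * l1 h * ls + ε * (1 + q * B + q * l1 h)
      ∧ c + q * l1 h * li - ε * (1 + q * (li + l1 h + 1)) ≤ li := by
    intro ε hε
    obtain ⟨T, hT0, hT⟩ : ∃ T, 0 ≤ T ∧ l1 h - ε ≤ ∫ u in (0:ℝ)..T, h u := by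
      have := (int0T_tendsto hk).eventually
        (eventually_ge_nhds (show l1 h - ε < l1 h by linarith))
      rcases ((this.and (eventually_ge_atTop 0)).exists) with ⟨T, h1, h2⟩
      exact ⟨T, h2, h1⟩
    set IT := ∫ u in (0:ℝ)..T, h u with hITdef
    have hIT0 : 0 ≤ IT := int0T_nonneg hk hT0
    have hITle : IT ≤ l1 h := int0T_le_l1 hk hT0
    have hup : ∀ᶠ u in atTop, f u < ls + ε :=
      eventually_lt_of_limsup_lt (by linarith) hbdd
    have hlow : ∀ᶠ u in atTop, li - ε < f u :=
      eventually_lt_of_lt_liminf (by linarith) hbdd'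
    have hgev : ∀ᶠ u in atTop, |g u - c| < ε :=
      hg.eventually (Metric.ball_mem_nhds c hε)
    obtain ⟨t₀, ht₀⟩ := eventually_atTop.1 ((hup.and hlow).and hgev)
    set m := max (li - ε) 0 with hmdef
    have hm0 : 0 ≤ m := le_max_right _ _
    have hmli : m ≤ li := max_le (by linarith) hli0
    have hmge : li - ε ≤ m := le_max_left _ _
    set t₁ := max t₀ 0 + T with ht₁def
    have hmain : ∀ t, t₁ ≤ t →
        (f t ≤ c + ε + q * (B * ε + (ls + ε) * l1 h))
        ∧ (c - ε + q * (m * IT) ≤ f t) := by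
      intro t htt
      have hmt : max t₀ 0 ≤ t - T := by simp only [ht₁def] at htt; linarith
      have ht : 0 ≤ t := le_trans (le_trans (le_max_right _ _) hmt) (by linarith)
      have hwin : ∀ u, u ∈ Icc (t - T) t → t₀ ≤ u :=
        fun u hu => le_trans (le_max_left t₀ 0) (le_trans hmt hu.1)
      have hTt : T ≤ t := by
        have : (0:ℝ) ≤ max t₀ 0 := le_max_right _ _
        linarith
      have hteq := heq t ht
      have hgt := ht₀ t (le_trans (le_trans (le_max_left _ _) hmt) (by linarith))
      have hgabs := abs_lt.1 hgt.2
      constructor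
      · have hcu : convK h f t ≤ B * (l1 h - IT) + (ls + ε) * l1 h :=
          convK_split_upper hk hf hT0 hTt hB (fun u hu => hfB u hu.1)
            (by linarith) (fun u hu => ((ht₀ u (hwin u hu)).1.1).le)
        have e1 : q * convK h f t ≤ q * (B * (l1 h - IT) + (ls + ε) * l1 h) :=
          mul_le_mul_of_nonneg_left hcu hq
        have e2 : q * (B * (l1 h - IT) + (ls + ε) * l1 h)
            ≤ q * (B * ε + (ls + ε) * l1 h) := by
          nlinarith [mul_le_mul_of_nonneg_left
            (show l1 h - IT ≤ ε by linarith) (mul_nonneg hq hB)]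
        linarith [hgabs.2]
      · have hcl : m * IT ≤ convK h f t :=
          convK_split_lower hk hf hT0 hTt hf0 hm0
            (fun u hu => le_trans (max_le ((ht₀ u (hwin u hu)).1.2).le (hf0 u))
              (le_refl _))
        nlinarith [hgabs.1]
    constructor
    · refine limsup_le_of_le hbdd'.isCoboundedUnder_le
        (eventually_atTop.2 ⟨t₁, fun t htt => le_trans (hmain t htt).1 ?_⟩)
      nlinarith
    · refine le_trans ?_ (le_liminf_of_le hbdd.isCoboundedUnder_ge
        (eventually_atTop.2 ⟨t₁, fun t htt => (hmain t htt).2⟩))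
      have hprod : q * l1 h * li - ε * (q * (li + l1 h + 1)) ≤ q * (m * IT) := by
        have hmIT : 0 ≤ q * (m * IT) := mul_nonneg hq (mul_nonneg hm0 hIT0)
        rcases le_or_gt li ε with hc | hc
        · nlinarith [mul_nonneg (mul_nonneg hq hl1)
            (show (0:ℝ) ≤ ε - li by linarith),
            mul_nonneg (mul_nonneg hε.le hq) (show (0:ℝ) ≤ li + 1 by linarith)]
        · rcases le_or_gt (l1 h) ε with hc2 | hc2
          · nlinarith [mul_nonneg (mul_nonneg hq hli0)
              (show (0:ℝ) ≤ ε - l1 h by linarith),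
              mul_nonneg (mul_nonneg hε.le hq) (show (0:ℝ) ≤ l1 h + 1 by linarith)]
          · have hmul : (li - ε) * (l1 h - ε) ≤ m * IT :=
              mul_le_mul hmge hT (by linarith) hm0
            have := mul_le_mul_of_nonneg_left hmul hq
            nlinarith [mul_nonneg (mul_nonneg hε.le hε.le) hq,
              mul_nonneg hε.le hq]
      linarith
  have hlsle : ls ≤ c / (1 - q * l1 h) := by
    rw [le_div_iff₀ hpos]
    have : ls ≤ c + q * l1 h * ls := by
      refine le_of_forall_pos_le_add fun ε hε => ?_
      have hC : (0:ℝ) < 1 + q * B + q * l1 h := by positivity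
      have := (key (ε / (1 + q * B + q * l1 h)) (by positivity)).1
      rw [div_mul_eq_mul_div, mul_div_assoc, div_self (ne_of_gt hC), mul_one] at this
      linarith
    nlinarith
  have hlige : c / (1 - q * l1 h) ≤ li := by
    rw [div_le_iff₀ hpos]
    have : c + q * l1 h * li ≤ li := by
      have h2 : ∀ ε : ℝ, 0 < ε → c + q * l1 h * li ≤ li + ε := by
        intro ε hε
        have hC : (0:ℝ) < 1 + q * (li + l1 h + 1) := by positivity
        have := (key (ε / (1 + q * (li + l1 h + 1))) (by positivity)).2
        rw [div_mul_eq_mul_div, mul_div_assoc, div_self (ne_of_gt hC), mul_one] at this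
        linarith
      exact le_of_forall_pos_le_add h2
    nlinarith
  exact tendsto_of_le_liminf_of_limsup_le hlige hlsle hbdd hbdd'


/-- Renewal theorem, divergent case. -/
lemma atTop_of_renewal (hk : KernelL1 h) (hf : Continuous f) {q μ T : ℝ}
    (hq : 0 ≤ q) (hT0 : 0 ≤ T) (hκ : 1 < q * ∫ u in (0:ℝ)..T, h u)
    (hμ : 0 < μ) (hf0 : ∀ u, 0 ≤ f u)
    (heq : ∀ t, 0 ≤ t → μ + q * convK h f t ≤ f t) :
    Tendsto f atTop atTop := by
  set κ' := q * ∫ u in (0:ℝ)..T, h u with hκ'def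
  have hstep : ∀ n : ℕ, ∀ t : ℝ, (n : ℝ) * T ≤ t → (n : ℝ) * μ ≤ f t := by
    intro n
    induction n with
    | zero => intro t _; simpa using hf0 t
    | succ n ih =>
      intro t ht
      have hT1 : ((n:ℝ) + 1) * T ≤ t := by push_cast at ht ⊢; linarith
      have htn : (0:ℝ) ≤ (n:ℝ) * T := by positivity
      have ht0 : (0:ℝ) ≤ t := le_trans (by positivity) hT1
      have hTt : T ≤ t := by nlinarith
      have hwin : ∀ u ∈ Icc (t - T) t, (n : ℝ) * μ ≤ f u := by
        intro u hu
        exact ih u (by nlinarith [hu.1])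
      have hcl : (n : ℝ) * μ * ∫ u in (0:ℝ)..T, h u ≤ convK h f t :=
        convK_split_lower hk hf hT0 hTt hf0 (by positivity) hwin
      have := heq t ht0
      have hconvnn := convK_nonneg hk ht0 hf0
      have hmul := mul_le_mul_of_nonneg_left hcl hq
      push_cast
      nlinarith [mul_nonneg (mul_nonneg (Nat.cast_nonneg n : (0:ℝ) ≤ n) hμ.le)
        (sub_nonneg.2 hκ.le)]
  rw [tendsto_atTop]
  intro C
  obtain ⟨n, hn⟩ := exists_nat_ge (C / μ)
  have hnC : C ≤ (n : ℝ) * μ := by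
    rw [div_le_iff₀ hμ] at hn; linarith
  filter_upwards [eventually_ge_atTop ((n : ℝ) * T)] with t ht
  exact le_trans hnC (hstep n t ht)

/-- Convolution of a convergent function tends to `l1 h * c`. -/
lemma convK_tendsto (hk : KernelL1 h) (hf : Continuous f) {c B : ℝ}
    (hf0 : ∀ u, 0 ≤ f u) (hB : 0 ≤ B) (hfB : ∀ t, 0 ≤ t → f t ≤ B)
    (hfc : Tendsto f atTop (𝓝 c)) :
    Tendsto (fun t => convK h f t) atTop (𝓝 (l1 h * c)) := by
  have hl1 : 0 ≤ l1 h := l1_nonneg hk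
  have hc0 : 0 ≤ c := le_of_tendsto_of_tendsto' tendsto_const_nhds hfc
    (fun t => by rcases le_or_gt 0 t with h | h
                 · exact hf0 t
                 · exact hf0 t)
  rw [Metric.tendsto_atTop]
  intro δ hδ
  set C : ℝ := 1 + B + l1 h + c with hCdef
  have hC : 0 < C := by positivity
  set ε := min (δ / (2 * C)) 1 with hεdef
  have hε : 0 < ε := lt_min (by positivity) one_pos
  have hε1 : ε ≤ 1 := min_le_right _ _
  have hεδ : ε * C ≤ δ / 2 := by
    have h1 : ε ≤ δ / (2 * C) := min_le_left _ _
    calc ε * C ≤ δ / (2 * C) * C := mul_le_mul_of_nonneg_right h1 hC.le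
      _ = δ / 2 := by field_simp
  obtain ⟨T, hT0, hT⟩ : ∃ T, 0 ≤ T ∧ l1 h - ε ≤ ∫ u in (0:ℝ)..T, h u := by
    have := (int0T_tendsto hk).eventually
      (eventually_ge_nhds (show l1 h - ε < l1 h by linarith))
    rcases ((this.and (eventually_ge_atTop 0)).exists) with ⟨T, h1, h2⟩
    exact ⟨T, h2, h1⟩
  set IT := ∫ u in (0:ℝ)..T, h u with hITdef
  have hIT0 : 0 ≤ IT := int0T_nonneg hk hT0
  have hITle : IT ≤ l1 h := int0T_le_l1 hk hT0
  have hfev : ∀ᶠ u in atTop, |f u - c| < ε :=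
    hfc.eventually (Metric.ball_mem_nhds c hε)
  obtain ⟨t₀, ht₀⟩ := eventually_atTop.1 hfev
  refine ⟨max t₀ 0 + T, fun t htt => ?_⟩
  have hmt : max t₀ 0 ≤ t - T := by linarith
  have ht : 0 ≤ t := le_trans (le_trans (le_max_right _ _) hmt) (by linarith)
  have hTt : T ≤ t := by
    have : (0:ℝ) ≤ max t₀ 0 := le_max_right _ _
    linarith
  have hwin : ∀ u, u ∈ Icc (t - T) t → t₀ ≤ u :=
    fun u hu => le_trans (le_max_left t₀ 0) (le_trans hmt hu.1)
  set m := max (c - ε) 0 with hmdef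
  have hm0 : 0 ≤ m := le_max_right _ _
  have hup : convK h f t ≤ B * (l1 h - IT) + (c + ε) * l1 h :=
    convK_split_upper hk hf hT0 hTt hB (fun u hu => hfB u hu.1)
      (by linarith) (fun u hu => by linarith [(abs_lt.1 (ht₀ u (hwin u hu))).2])
  have hlo : m * IT ≤ convK h f t :=
    convK_split_lower hk hf hT0 hTt hf0 hm0
      (fun u hu => max_le (by linarith [(abs_lt.1 (ht₀ u (hwin u hu))).1]) (hf0 u))
  have hmc : c - ε ≤ m := le_max_left _ _
  have hmlec : m ≤ c := max_le (by linarith) hc0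
  clear_value C ε IT m
  rw [Real.dist_eq, abs_lt]
  constructor
  · -- l1 h * c - δ < convK
    have hprod : l1 h * c - ε * (c + l1 h + 1) ≤ m * IT := by
      rcases le_or_gt c ε with hcc | hcc
      · nlinarith [mul_nonneg hm0 hIT0]
      · rcases le_or_gt (l1 h) ε with hc2 | hc2
        · nlinarith [mul_nonneg hm0 hIT0]
        · have hmul : (c - ε) * (l1 h - ε) ≤ m * IT :=
            mul_le_mul hmc hT (by linarith) hm0
          nlinarith
    have : ε * (c + l1 h + 1) ≤ ε * C := by
      have : c + l1 h + 1 ≤ C := by simp only [hCdef]; linarith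
      exact mul_le_mul_of_nonneg_left this hε.le
    linarith
  · -- convK < l1 h * c + δ
    have h1 : convK h f t ≤ B * ε + c * l1 h + ε * l1 h := by nlinarith
    have h2 : B * ε + ε * l1 h ≤ ε * C := by
      have : B + l1 h ≤ C := by simp only [hCdef]; linarith
      nlinarith
    have : c * l1 h = l1 h * c := mul_comm _ _
    linarith

/-- Convolution against a function tending to infinity tends to infinity. -/
lemma convK_atTop (hk : KernelL1 h) (hf : Continuous f) {T : ℝ}
    (hT0 : 0 ≤ T) (hJ : 0 < ∫ u in (0:ℝ)..T, h u)
    (hf0 : ∀ u, 0 ≤ f u) (hfc : Tendsto f atTop atTop) :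
    Tendsto (fun t => convK h f t) atTop atTop := by
  set J := ∫ u in (0:ℝ)..T, h u with hJdef
  rw [tendsto_atTop]
  intro C
  set M := max (C / J) 0 with hMdef
  have hM0 : 0 ≤ M := le_max_right _ _
  have hCM : C ≤ M * J := by
    have h1 : C / J ≤ M := le_max_left _ _
    rw [div_le_iff₀ hJ] at h1
    linarith
  obtain ⟨t₀, ht₀⟩ := eventually_atTop.1 (hfc.eventually_ge_atTop M)
  filter_upwards [eventually_ge_atTop (max t₀ 0 + T)] with t htt
  have hmt : max t₀ 0 ≤ t - T := by linarith
  have hTt : T ≤ t := by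
    have : (0:ℝ) ≤ max t₀ 0 := le_max_right _ _
    linarith
  have hlo : M * J ≤ convK h f t :=
    convK_split_lower hk hf hT0 hTt hf0 hM0
      (fun u hu => ht₀ u (le_trans (le_max_left t₀ 0) (le_trans hmt hu.1)))
  linarith


lemma convK_zero (hk : KernelL1 h) (hl1 : l1 h = 0) (hf : Continuous f)
    (hf0 : ∀ u, 0 ≤ f u) {t : ℝ} (ht : 0 ≤ t) : convK h f t = 0 := by
  obtain ⟨ts, hts, hmax⟩ := (isCompact_Icc (a := (0:ℝ)) (b := t)).exists_isMaxOn
    (nonempty_Icc.2 ht) hf.continuousOn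
  have h1 : convK h f t ≤ f ts * l1 h :=
    convK_le hk hf ht (hf0 ts) (fun u hu => hmax hu)
  rw [hl1, mul_zero] at h1
  exact le_antisymm h1 (convK_nonneg hk ht hf0)

end Aux

open Aux in
/-- Retroaction without inhibition: `κ₂ = 0`, `κ₄ > 0`. -/
theorem stmt4
    (α : ℝ) (hα : α ∈ Set.Ioo (0:ℝ) 1)
    (h₁ h₂ h₃ h₄ : ℝ → ℝ)
    (hh₁ : KernelOK h₁) (hh₂ : KernelOK h₂) (hh₃ : KernelOK h₃) (hh₄ : KernelOK h₄)
    (κ₁ κ₂ κ₃ κ₄ : ℝ)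
    (hκ₁ : κ₁ = α * l1 h₁) (hκ₂ : κ₂ = (1 - α) * l1 h₂)
    (hκ₃ : κ₃ = (1 - α) * l1 h₃) (hκ₄ : κ₄ = α * l1 h₄)
    (ΦBA ΦAB : ℝ → ℝ) (hBA : InhibOK ΦBA) (hAB : FeedOK ΦAB)
    (ΦA ΦB : ℝ → ℝ) (LA LB : ℝ) (hLA : 0 ≤ LA) (hLB : 0 ≤ LB)
    (hΦApos : ∀ x, 0 ≤ x → 0 ≤ ΦA x) (hΦBpos : ∀ x, 0 ≤ x → 0 ≤ ΦB x)
    (hΦAlip : ∀ x y, 0 ≤ x → 0 ≤ y → |ΦA x - ΦA y| ≤ LA * |x - y|)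
    (hΦBlip : ∀ x y, 0 ≤ x → 0 ≤ y → |ΦB x - ΦB y| ≤ LB * |x - y|)
    (μA μB : ℝ) (hμA : 0 ≤ μA) (hμB : 0 ≤ μB)
    (hk2 : κ₂ = 0) (hk4 : 0 < κ₄) :
    (LA * κ₁ < 1 → ∀ lA lB, IsGenSys α h₁ h₂ h₃ h₄ ΦA ΦB ΦBA ΦAB lA lB →
        BddAbove (lA '' Set.Ici 0)) ∧
    (∀ lA lB, IsLinSys α h₁ h₂ h₃ h₄ ΦBA ΦAB μA μB lA lB →
      (κ₁ < 1 →
        Tendsto lA atTop (𝓝 (μA / (1 - κ₁))) ∧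
        (κ₃ < 1 →
          Tendsto lB atTop
            (𝓝 (μB / (1 - κ₃) + ΦAB (κ₄ * (μA / (1 - κ₁))) / (1 - κ₃)))) ∧
        (1 < κ₃ → 0 < μB → Tendsto lB atTop atTop)) ∧
      (1 < κ₁ → 0 < μA →
        Tendsto lA atTop atTop ∧ Tendsto lB atTop atTop)) := by
  obtain ⟨hα0, hα1⟩ := hα
  have hα1' : (0:ℝ) < 1 - α := by linarith
  have hk₁ := hh₁.1; have hk₂ := hh₂.1; have hk₃ := hh₃.1; have hk₄ := hh₄.1
  have hl1₁ : 0 ≤ l1 h₁ := l1_nonneg hk₁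
  have hl1₃ : 0 ≤ l1 h₃ := l1_nonneg hk₃
  have hl1₄pos : 0 < l1 h₄ := by
    rcases lt_or_ge 0 (l1 h₄) with h | h
    · exact h
    · exfalso; nlinarith
  have hl1₂ : l1 h₂ = 0 := by
    have : (1 - α) * l1 h₂ = 0 := by rw [← hκ₂]; exact hk2
    rcases mul_eq_zero.1 this with h | h
    · exfalso; linarith
    · exact h
  -- ΦBA basic facts
  have hBA0 : ΦBA 0 = 1 := hBA.2.2.1
  -- convolution with h₂ vanishes
  have conv2 : ∀ (f : ℝ → ℝ), Continuous f → (∀ u, 0 ≤ f u) →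
      ∀ t, 0 ≤ t → convK h₂ f t = 0 :=
    fun f hf hf0 t ht => convK_zero hk₂ hl1₂ hf hf0 ht
  constructor
  · -- general system boundedness
    intro hLAκ lA lB hsys
    obtain ⟨hcA, hcB, hA0, hB0, heqA, heqB⟩ := hsys
    have heqA' : ∀ t, 0 ≤ t → lA t = ΦA (α * convK h₁ lA t) := by
      intro t ht
      rw [heqA t ht, conv2 lB hcB hB0 t ht, mul_zero, hBA0, mul_one]
    have hineq : ∀ t, 0 ≤ t → lA t ≤ ΦA 0 + (LA * α) * convK h₁ lA t := by
      intro t ht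
      have hx : 0 ≤ α * convK h₁ lA t :=
        mul_nonneg hα0.le (convK_nonneg hk₁ ht hA0)
      have := hΦAlip (α * convK h₁ lA t) 0 hx le_rfl
      rw [sub_zero, abs_of_nonneg hx] at this
      have h2 := abs_le.1 this
      rw [heqA' t ht]
      nlinarith [h2.2]
    have hκq : LA * α * l1 h₁ < 1 := by
      have : LA * α * l1 h₁ = LA * κ₁ := by rw [hκ₁]; ring
      linarith [this ▸ hLAκ]
    have hbd := bdd_of_renewal hk₁ hcA (by positivity) hκq (hΦApos 0 le_rfl) hA0 hineq
    refine ⟨ΦA 0 / (1 - LA * α * l1 h₁), ?_⟩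
    rintro y ⟨t, ht, rfl⟩
    exact hbd t ht
  · -- linear system
    intro lA lB hsys
    obtain ⟨hcA, hcB, hA0, hB0, heqA, heqB⟩ := hsys
    have heqA' : ∀ t, 0 ≤ t → lA t = μA + α * convK h₁ lA t := by
      intro t ht
      rw [heqA t ht, conv2 lB hcB hB0 t ht, mul_zero, hBA0, mul_one]
    have heqB' : ∀ t, 0 ≤ t →
        lB t = (μB + ΦAB (α * convK h₄ lA t)) + (1 - α) * convK h₃ lB t := by
      intro t ht
      rw [heqB t ht]; ring
    obtain ⟨K, hK0, hKlip⟩ := hAB.1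
    have hABz : ΦAB 0 = 0 := hAB.2.2.1
    have hABnn : ∀ x, 0 ≤ x → 0 ≤ ΦAB x := hAB.2.2.2.1
    constructor
    · -- κ₁ < 1
      intro hκ1
      have hκα : α * l1 h₁ < 1 := by rw [← hκ₁]; exact hκ1
      have hden₁ : 0 < 1 - α * l1 h₁ := by linarith
      set B := μA / (1 - α * l1 h₁) with hBdef
      have hB0' : 0 ≤ B := div_nonneg hμA hden₁.le
      have hlAB : ∀ t, 0 ≤ t → lA t ≤ B :=
        bdd_of_renewal hk₁ hcA hα0.le hκα hμA hA0
          (fun t ht => le_of_eq (heqA' t ht))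
      have hlAtend : Tendsto lA atTop (𝓝 (μA / (1 - κ₁))) := by
        rw [hκ₁]
        exact tendsto_of_renewal hk₁ hcA hα0.le hκα hA0 hB0' hlAB
          tendsto_const_nhds heqA'
      refine ⟨hlAtend, ?_, ?_⟩
      · -- κ₃ < 1
        intro hκ3
        have hκα₃ : (1 - α) * l1 h₃ < 1 := by rw [← hκ₃]; exact hκ3
        set c := μA / (1 - κ₁) with hcdef
        have hc0 : 0 ≤ c := by
          rw [hcdef, hκ₁]; exact div_nonneg hμA (by rw [hκ₁] at hκ1; linarith)
        set p := κ₄ * c with hpdef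
        have hp0 : 0 ≤ p := mul_nonneg hk4.le hc0
        -- G tends to p
        have hGconv : Tendsto (fun t => α * convK h₄ lA t) atTop (𝓝 p) := by
          have h1 := convK_tendsto hk₄ hcA hA0 hB0' hlAB hlAtend
          have h2 := h1.const_mul α
          have : α * (l1 h₄ * c) = p := by rw [hpdef, hκ₄]; ring
          rwa [this] at h2
        -- ΦAB ∘ G tends to ΦAB p
        have hΦG : Tendsto (fun t => ΦAB (α * convK h₄ lA t)) atTop (𝓝 (ΦAB p)) := by
          have habs : Tendsto (fun t => |α * convK h₄ lA t - p|) atTop (𝓝 0) := by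
            have := (hGconv.sub_const p).abs
            simpa using this
          have hlow : Tendsto (fun t => ΦAB p - K * |α * convK h₄ lA t - p|)
              atTop (𝓝 (ΦAB p)) := by
            have := (habs.const_mul K).const_sub (ΦAB p)
            simpa using this
          have hhigh : Tendsto (fun t => ΦAB p + K * |α * convK h₄ lA t - p|)
              atTop (𝓝 (ΦAB p)) := by
            have := (habs.const_mul K).const_add (ΦAB p)
            simpa using this
          refine tendsto_of_tendsto_of_tendsto_of_le_of_le' hlow hhigh ?_ ?_
          · filter_upwards [eventually_ge_atTop (0:ℝ)] with t ht
            have hx : 0 ≤ α * convK h₄ lA t :=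
              mul_nonneg hα0.le (convK_nonneg hk₄ ht hA0)
            have := abs_le.1 (hKlip (α * convK h₄ lA t) p hx hp0)
            have h3 := abs_le.1 (le_refl |α * convK h₄ lA t - p|)
            linarith [this.1]
          · filter_upwards [eventually_ge_atTop (0:ℝ)] with t ht
            have hx : 0 ≤ α * convK h₄ lA t :=
              mul_nonneg hα0.le (convK_nonneg hk₄ ht hA0)
            have := abs_le.1 (hKlip (α * convK h₄ lA t) p hx hp0)
            linarith [this.2]
        have hgtend : Tendsto (fun t => μB + ΦAB (α * convK h₄ lA t)) atTop
            (𝓝 (μB + ΦAB p)) := hΦG.const_add μB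
        -- bound for lB
        have hgB : ∀ t, 0 ≤ t →
            μB + ΦAB (α * convK h₄ lA t) ≤ μB + K * (α * (B * l1 h₄)) := by
          intro t ht
          have hx : 0 ≤ α * convK h₄ lA t :=
            mul_nonneg hα0.le (convK_nonneg hk₄ ht hA0)
          have hxle : α * convK h₄ lA t ≤ α * (B * l1 h₄) := by
            have := convK_le hk₄ hcA ht hB0' (fun u hu => hlAB u hu.1)
            nlinarith
          have h5 := hKlip (α * convK h₄ lA t) 0 hx le_rfl
          rw [sub_zero, abs_of_nonneg hx, hABz, sub_zero] at h5
          have h6 := (abs_le.1 h5).2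
          nlinarith [h6]
        set Mg := μB + K * (α * (B * l1 h₄)) with hMgdef
        have hMg0 : 0 ≤ Mg := by positivity
        have hlBbd : ∀ t, 0 ≤ t → lB t ≤ Mg / (1 - (1 - α) * l1 h₃) :=
          bdd_of_renewal hk₃ hcB hα1'.le hκα₃ hMg0 hB0
            (fun t ht => by rw [heqB' t ht]; gcongr; exact hgB t ht)
        have hBB0 : 0 ≤ Mg / (1 - (1 - α) * l1 h₃) :=
          div_nonneg hMg0 (by linarith)
        have := tendsto_of_renewal hk₃ hcB hα1'.le hκα₃ hB0 hBB0 hlBbd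
          hgtend heqB'
        have heqc : (μB + ΦAB p) / (1 - (1 - α) * l1 h₃)
            = μB / (1 - κ₃) + ΦAB (κ₄ * (μA / (1 - κ₁))) / (1 - κ₃) := by
          rw [hκ₃, add_div, hpdef, hcdef]
        rwa [heqc] at this
      · -- 1 < κ₃
        intro hκ3 hμB'
        have hineqB : ∀ t, 0 ≤ t → μB + (1 - α) * convK h₃ lB t ≤ lB t := by
          intro t ht
          rw [heqB t ht]
          beta_reduce
          have hx : 0 ≤ α * convK h₄ lA t :=
            mul_nonneg hα0.le (convK_nonneg hk₄ ht hA0)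
          have := hABnn _ hx
          linarith
        obtain ⟨T, hT0, hT⟩ : ∃ T, 0 ≤ T ∧ 1 < (1 - α) * ∫ u in (0:ℝ)..T, h₃ u := by
          have h1 : Tendsto (fun T => (1 - α) * ∫ u in (0:ℝ)..T, h₃ u) atTop
              (𝓝 ((1 - α) * l1 h₃)) := (int0T_tendsto hk₃).const_mul _
          have h2 := h1.eventually (eventually_gt_nhds (by rw [← hκ₃]; exact hκ3))
          rcases (h2.and (eventually_ge_atTop 0)).exists with ⟨T, hT1, hT2⟩
          exact ⟨T, hT2, hT1⟩
        exact atTop_of_renewal hk₃ hcB hα1'.le hT0 hT hμB' hB0 hineqB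
    · -- 1 < κ₁
      intro hκ1 hμA'
      have hineqA : ∀ t, 0 ≤ t → μA + α * convK h₁ lA t ≤ lA t :=
        fun t ht => le_of_eq (heqA' t ht).symm
      obtain ⟨T, hT0, hT⟩ : ∃ T, 0 ≤ T ∧ 1 < α * ∫ u in (0:ℝ)..T, h₁ u := by
        have h1 : Tendsto (fun T => α * ∫ u in (0:ℝ)..T, h₁ u) atTop
            (𝓝 (α * l1 h₁)) := (int0T_tendsto hk₁).const_mul _
        have h2 := h1.eventually (eventually_gt_nhds (by rw [← hκ₁]; exact hκ1))
        rcases (h2.and (eventually_ge_atTop 0)).exists with ⟨T, hT1, hT2⟩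
        exact ⟨T, hT2, hT1⟩
      have hlAtop : Tendsto lA atTop atTop :=
        atTop_of_renewal hk₁ hcA hα0.le hT0 hT hμA' hA0 hineqA
      refine ⟨hlAtop, ?_⟩
      obtain ⟨T₄, hT₄0, hT₄⟩ : ∃ T, 0 ≤ T ∧ 0 < ∫ u in (0:ℝ)..T, h₄ u := by
        have h2 := (int0T_tendsto hk₄).eventually (eventually_gt_nhds hl1₄pos)
        rcases (h2.and (eventually_ge_atTop 0)).exists with ⟨T, hT1, hT2⟩
        exact ⟨T, hT2, hT1⟩
      have hGtop : Tendsto (fun t => α * convK h₄ lA t) atTop atTop :=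
        (convK_atTop hk₄ hcA hT₄0 hT₄ hA0 hlAtop).const_mul_atTop hα0
      have hΦtop : Tendsto (fun t => ΦAB (α * convK h₄ lA t)) atTop atTop :=
        hAB.2.2.2.2.comp hGtop
      refine tendsto_atTop_mono' atTop ?_ hΦtop
      filter_upwards [eventually_ge_atTop (0:ℝ)] with t ht
      rw [heqB t ht]
      beta_reduce
      have hx : 0 ≤ (1 - α) * convK h₃ lB t :=
        mul_nonneg hα1'.le (convK_nonneg hk₃ ht hB0)
      linarith
end

section
/- Suppose κ₂ > 0 and κ₄ > 0 (full connectivity). Then for the general mean-field system (λ^A, λ^B): (1) whatever the values of κ₁, κ₂, κ₃, κ₄, λ^A(t) does not tend to +∞ as t → ∞, i.e. liminf_{t→∞} λ^A(t) < ∞; (2) if λ^B(t) → +∞ as t → ∞, then λ^A(t) → 0 as t → ∞. -/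
open MeasureTheory Filter Topology Set
open scoped ENNReal

lemma l1_nonneg (h : ℝ → ℝ) (hK : KernelL1 h) : 0 ≤ l1 h :=
  setIntegral_nonneg measurableSet_Ioi fun u hu => hK.2.1 u (le_of_lt hu)

lemma comp_intervalIntegrable (h : ℝ → ℝ) (hK : KernelL1 h) (t : ℝ) (ht : 0 ≤ t) :
    IntervalIntegrable (fun u => h (t - u)) volume 0 t := by
  have h1 : IntervalIntegrable h volume 0 t :=
    (intervalIntegrable_iff_integrableOn_Ioc_of_le ht).mpr
      (hK.2.2.mono_set Ioc_subset_Ioi_self)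
  have h2 := (h1.comp_sub_left t).symm
  simpa using h2

lemma conv_integrable (h f : ℝ → ℝ) (hK : KernelL1 h) (hf : Continuous f) (t : ℝ) (ht : 0 ≤ t) :
    IntervalIntegrable (fun u => h (t - u) * f u) volume 0 t :=
  (comp_intervalIntegrable h hK t ht).mul_continuousOn hf.continuousOn

lemma conv_nonneg' (h f : ℝ → ℝ) (hK : KernelL1 h) (hfpos : ∀ u, 0 ≤ f u) (t : ℝ) (ht : 0 ≤ t) :
    0 ≤ convK h f t :=
  intervalIntegral.integral_nonneg ht fun u hu =>
    mul_nonneg (hK.2.1 _ (by linarith [hu.2])) (hfpos u)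

lemma integral_comp_eq (h : ℝ → ℝ) (a t : ℝ) :
    ∫ u in a..t, h (t - u) = ∫ s in (0:ℝ)..(t - a), h s := by
  simpa using intervalIntegral.integral_comp_sub_left (a := a) (b := t) h t

lemma conv_upper (h f : ℝ → ℝ) (hK : KernelL1 h) (hf : Continuous f) (t S : ℝ)
    (ht : 0 ≤ t) (hS : 0 ≤ S) (hb : ∀ u ∈ Icc 0 t, f u ≤ S) :
    convK h f t ≤ S * l1 h := by
  have h1 : convK h f t ≤ ∫ u in (0:ℝ)..t, h (t - u) * S := by
    apply intervalIntegral.integral_mono_on ht (conv_integrable h f hK hf t ht)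
      ((comp_intervalIntegrable h hK t ht).mul_const S)
    intro u hu
    exact mul_le_mul_of_nonneg_left (hb u hu) (hK.2.1 _ (by linarith [hu.2]))
  have h2 : ∫ u in (0:ℝ)..t, h (t - u) * S = (∫ s in (0:ℝ)..t, h s) * S := by
    rw [intervalIntegral.integral_mul_const]
    rw [integral_comp_eq h 0 t]
    norm_num
  have h3 : ∫ s in (0:ℝ)..t, h s ≤ l1 h := by
    rw [intervalIntegral.integral_of_le ht]
    exact setIntegral_mono_set hK.2.2
      ((ae_restrict_iff' measurableSet_Ioi).mpr (ae_of_all _ fun u hu => hK.2.1 u hu.le))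
      (HasSubset.Subset.eventuallyLE Ioc_subset_Ioi_self)
  calc convK h f t ≤ (∫ s in (0:ℝ)..t, h s) * S := h1.trans h2.le
    _ ≤ l1 h * S := mul_le_mul_of_nonneg_right h3 hS
    _ = S * l1 h := mul_comm _ _

lemma conv_lower (h f : ℝ → ℝ) (hK : KernelL1 h) (hf : Continuous f) (hfpos : ∀ u, 0 ≤ f u)
    (K T n t : ℝ) (hKpos : 0 ≤ K) (hT : 0 ≤ T) (hn : 0 ≤ n)
    (hfK : ∀ u, T ≤ u → K ≤ f u) (ht : T + n ≤ t) :
    K * ∫ s in (0:ℝ)..n, h s ≤ convK h f t := by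
  have ht0 : 0 ≤ t := by linarith
  have htn : 0 ≤ t - n := by linarith
  have hint := conv_integrable h f hK hf t ht0
  have hi1 : IntervalIntegrable (fun u => h (t - u) * f u) volume 0 (t - n) :=
    hint.mono_set (by rw [uIcc_of_le (by linarith), uIcc_of_le ht0]; exact Icc_subset_Icc le_rfl (by linarith))
  have hi2 : IntervalIntegrable (fun u => h (t - u) * f u) volume (t - n) t :=
    hint.mono_set (by rw [uIcc_of_le (by linarith), uIcc_of_le ht0]; exact Icc_subset_Icc htn le_rfl)
  have hsplit : convK h f t = (∫ u in (0:ℝ)..(t-n), h (t - u) * f u) + ∫ u in (t-n)..t, h (t - u) * f u :=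
    (intervalIntegral.integral_add_adjacent_intervals hi1 hi2).symm
  have hpos1 : 0 ≤ ∫ u in (0:ℝ)..(t-n), h (t - u) * f u :=
    intervalIntegral.integral_nonneg htn fun u hu =>
      mul_nonneg (hK.2.1 _ (by linarith [hu.2])) (hfpos u)
  have hcomp : IntervalIntegrable (fun u => h (t - u)) volume (t - n) t :=
    (comp_intervalIntegrable h hK t ht0).mono_set
      (by rw [uIcc_of_le (by linarith), uIcc_of_le ht0]; exact Icc_subset_Icc htn le_rfl)
  have h2 : ∫ u in (t-n)..t, h (t - u) * K ≤ ∫ u in (t-n)..t, h (t - u) * f u := by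
    apply intervalIntegral.integral_mono_on (by linarith) (hcomp.mul_const K) hi2
    intro u hu
    exact mul_le_mul_of_nonneg_left (hfK u (by linarith [hu.1])) (hK.2.1 _ (by linarith [hu.2]))
  have h3 : ∫ u in (t-n)..t, h (t - u) * K = K * ∫ s in (0:ℝ)..n, h s := by
    rw [intervalIntegral.integral_mul_const, integral_comp_eq h (t - n) t]
    ring_nf
  calc K * ∫ s in (0:ℝ)..n, h s = ∫ u in (t-n)..t, h (t - u) * K := h3.symm
    _ ≤ ∫ u in (t-n)..t, h (t - u) * f u := h2
    _ ≤ convK h f t := by rw [hsplit]; linarith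

lemma conv_tendsto_atTop (h f : ℝ → ℝ) (hK : KernelL1 h) (hf : Continuous f)
    (hfpos : ∀ u, 0 ≤ f u) (hl1 : 0 < l1 h) (hftop : Tendsto f atTop atTop) :
    Tendsto (fun t => convK h f t) atTop atTop := by
  -- choose n with positive mass
  have hun : (⋃ n : ℕ, Ioc (0:ℝ) n) = Ioi 0 := by
    ext x
    simp only [mem_iUnion, mem_Ioc, mem_Ioi]
    constructor
    · rintro ⟨n, hn, _⟩; exact hn
    · intro hx; obtain ⟨n, hn⟩ := exists_nat_ge x; exact ⟨n, hx, hn⟩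
  have htend : Tendsto (fun n : ℕ => ∫ s in Ioc (0:ℝ) n, h s) atTop (𝓝 (l1 h)) := by
    have := tendsto_setIntegral_of_monotone (s := fun n : ℕ => Ioc (0:ℝ) n)
      (fun i => measurableSet_Ioc)
      (fun i j hij => Ioc_subset_Ioc_right (by exact_mod_cast hij))
      (μ := volume) (f := h) (by rw [hun]; exact hK.2.2)
    rwa [hun] at this
  obtain ⟨n, hn⟩ := (htend.eventually (eventually_gt_nhds (half_lt_self hl1))).exists
  set c : ℝ := ∫ s in Ioc (0:ℝ) (n:ℝ), h s with hc
  have hcpos : 0 < c := lt_trans (half_pos hl1) hn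
  have hceq : ∫ s in (0:ℝ)..(n:ℝ), h s = c := intervalIntegral.integral_of_le (Nat.cast_nonneg n)
  rw [tendsto_atTop]
  intro M
  set K : ℝ := max (M / c) 0 with hKdef
  obtain ⟨T', hT'⟩ := eventually_atTop.mp (tendsto_atTop.mp hftop K)
  filter_upwards [eventually_ge_atTop (max T' 0 + n)] with t ht
  have hlow := conv_lower h f hK hf hfpos K (max T' 0) n t (le_max_right _ _)
    (le_max_right _ _) (Nat.cast_nonneg n)
    (fun u hu => hT' u (le_trans (le_max_left _ _) hu)) ht
  rw [hceq] at hlow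
  have hMK : M ≤ K * c := (div_le_iff₀ hcpos).mp (le_max_left _ _)
  linarith

set_option maxHeartbeats 2000000 in
/-- Full connectivity, general system: population A cannot be supercritical;
if B diverges then A vanishes. -/
theorem stmt5
    (α : ℝ) (hα : α ∈ Set.Ioo (0:ℝ) 1)
    (h₁ h₂ h₃ h₄ : ℝ → ℝ)
    (hh₁ : KernelOK h₁) (hh₂ : KernelOK h₂) (hh₃ : KernelOK h₃) (hh₄ : KernelOK h₄)
    (κ₁ κ₂ κ₃ κ₄ : ℝ)
    (hκ₁ : κ₁ = α * l1 h₁) (hκ₂ : κ₂ = (1 - α) * l1 h₂)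
    (hκ₃ : κ₃ = (1 - α) * l1 h₃) (hκ₄ : κ₄ = α * l1 h₄)
    (ΦBA ΦAB : ℝ → ℝ) (hBA : InhibOK ΦBA) (hAB : FeedOK ΦAB)
    (ΦA ΦB : ℝ → ℝ) (LA LB : ℝ) (hLA : 0 ≤ LA) (hLB : 0 ≤ LB)
    (hΦApos : ∀ x, 0 ≤ x → 0 ≤ ΦA x) (hΦBpos : ∀ x, 0 ≤ x → 0 ≤ ΦB x)
    (hΦAlip : ∀ x y, 0 ≤ x → 0 ≤ y → |ΦA x - ΦA y| ≤ LA * |x - y|)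
    (hΦBlip : ∀ x y, 0 ≤ x → 0 ≤ y → |ΦB x - ΦB y| ≤ LB * |x - y|)
    (hk2 : 0 < κ₂) (hk4 : 0 < κ₄) :
    ∀ lA lB, IsGenSys α h₁ h₂ h₃ h₄ ΦA ΦB ΦBA ΦAB lA lB →
      eliminf lA < ⊤ ∧
      (Tendsto lB atTop atTop → Tendsto lA atTop (𝓝 0)) := by
  
  intro lA lB hsys
  obtain ⟨hcA, hcB, hApos, hBpos, heqA, heqB⟩ := hsys
  have hα0 : 0 < α := hα.1
  have hα1 : α < 1 := hα.2
  -- core: if lB → ∞ then lA → 0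
  have key : Tendsto lB atTop atTop → Tendsto lA atTop (𝓝 0) := by
    intro hBtop
    have hl2pos : 0 < l1 h₂ := by
      have h : 0 < (1 - α) * l1 h₂ := by rw [← hκ₂]; exact hk2
      nlinarith [l1_nonneg h₂ hh₂.1]
    have hconv2 : Tendsto (fun t => convK h₂ lB t) atTop atTop :=
      conv_tendsto_atTop h₂ lB hh₂.1 hcB hBpos hl2pos hBtop
    have hz : Tendsto (fun t => (1 - α) * convK h₂ lB t) atTop atTop :=
      hconv2.const_mul_atTop (by linarith)
    have hε : Tendsto (fun t => ΦBA ((1 - α) * convK h₂ lB t)) atTop (𝓝 0) :=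
      hBA.2.2.2.2.comp hz
    set a : ℝ := ΦA 0 with hadef
    have ha : 0 ≤ a := hΦApos 0 le_rfl
    set C : ℝ := LA * (α * l1 h₁) with hCdef
    have hCpos : 0 ≤ C := mul_nonneg hLA (mul_nonneg hα0.le (l1_nonneg h₁ hh₁.1))
    -- pointwise bound
    have key2 : ∀ t B, 0 ≤ t → 0 ≤ B → (∀ u ∈ Icc (0:ℝ) t, lA u ≤ B) →
        lA t ≤ (a + C * B) * ΦBA ((1 - α) * convK h₂ lB t) := by
      intro t B ht hB hb
      have hx : 0 ≤ α * convK h₁ lA t :=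
        mul_nonneg hα0.le (conv_nonneg' h₁ lA hh₁.1 hApos t ht)
      have hy : 0 ≤ (1 - α) * convK h₂ lB t :=
        mul_nonneg (by linarith) (conv_nonneg' h₂ lB hh₂.1 hBpos t ht)
      have hΦAx : ΦA (α * convK h₁ lA t) ≤ a + LA * (α * convK h₁ lA t) := by
        have hlip := hΦAlip (α * convK h₁ lA t) 0 hx le_rfl
        have h2 : ΦA (α * convK h₁ lA t) - a ≤ LA * (α * convK h₁ lA t) := by
          calc ΦA (α * convK h₁ lA t) - a ≤ |ΦA (α * convK h₁ lA t) - ΦA 0| := le_abs_self _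
            _ ≤ LA * |α * convK h₁ lA t - 0| := hlip
            _ = LA * (α * convK h₁ lA t) := by rw [sub_zero, abs_of_nonneg hx]
        linarith
      have hBA01 := hBA.2.2.2.1 _ hy
      have hconvA : convK h₁ lA t ≤ B * l1 h₁ := conv_upper h₁ lA hh₁.1 hcA t B ht hB hb
      rw [heqA t ht]
      calc ΦA (α * convK h₁ lA t) * ΦBA ((1 - α) * convK h₂ lB t)
          ≤ (a + LA * (α * convK h₁ lA t)) * ΦBA ((1 - α) * convK h₂ lB t) :=
            mul_le_mul_of_nonneg_right hΦAx hBA01.1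
        _ ≤ (a + C * B) * ΦBA ((1 - α) * convK h₂ lB t) := by
            apply mul_le_mul_of_nonneg_right _ hBA01.1
            have h3 : LA * (α * convK h₁ lA t) ≤ LA * (α * (B * l1 h₁)) := by
              apply mul_le_mul_of_nonneg_left _ hLA
              exact mul_le_mul_of_nonneg_left hconvA hα0.le
            have h4 : LA * (α * (B * l1 h₁)) = C * B := by rw [hCdef]; ring
            linarith
    -- choose η and T
    set η : ℝ := min (1 / (2 * (C + 1))) (1 / (a + 1)) with hηdef
    have hηpos : 0 < η := lt_min (by positivity) (by positivity)
    obtain ⟨T₀, hT₀⟩ := eventually_atTop.mp (hε.eventually (eventually_lt_nhds hηpos))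
    set T : ℝ := max T₀ 1 with hTdef
    have hT1 : (1:ℝ) ≤ T := le_max_right _ _
    have hεT : ∀ t, T ≤ t → ΦBA ((1 - α) * convK h₂ lB t) < η := fun t ht =>
      hT₀ t (le_trans (le_max_left _ _) ht)
    obtain ⟨B₀, hB₀⟩ :=
      (isCompact_Icc (a := (0:ℝ)) (b := T)).exists_bound_of_continuousOn hcA.continuousOn
    set B : ℝ := max B₀ 0 + 3 with hBdef
    have hB3 : (3:ℝ) ≤ B := le_add_of_nonneg_left (le_max_right _ _)
    have hBnn : 0 ≤ B := by linarith
    have hB₀B : ∀ u ∈ Icc (0:ℝ) T, lA u ≤ B := by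
      intro u hu
      have h1 := hB₀ u hu
      rw [Real.norm_eq_abs] at h1
      have := le_abs_self (lA u)
      have := le_max_left B₀ 0
      linarith
    -- η * a ≤ 1 and η * C ≤ 1/2
    have e1 : η * (a + 1) ≤ 1 := by
      rw [← le_div_iff₀ (by positivity : (0:ℝ) < a + 1)]
      exact min_le_right _ _
    have e2 : η * (2 * (C + 1)) ≤ 1 := by
      rw [← le_div_iff₀ (by positivity : (0:ℝ) < 2 * (C + 1))]
      exact min_le_left _ _
    have hηa : η * a ≤ 1 := by nlinarith
    have hηC : η * C ≤ 1 / 2 := by nlinarith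
    -- global bound for t ≥ T
    have hglobal : ∀ t, T ≤ t → lA t ≤ B := by
      by_contra hcon
      push_neg at hcon
      obtain ⟨t₁, ht₁T, ht₁B⟩ := hcon
      set Sset : Set ℝ := {t | T ≤ t ∧ B ≤ lA t} with hSdef
      have hSne : Sset.Nonempty := ⟨t₁, ht₁T, ht₁B.le⟩
      have hSbdd : BddBelow Sset := ⟨T, fun s hs => hs.1⟩
      have hSclosed : IsClosed Sset := by
        have : Sset = {t | T ≤ t} ∩ {t | B ≤ lA t} := rfl
        rw [this]
        exact (isClosed_le continuous_const continuous_id).inter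
          (isClosed_le continuous_const hcA)
      set t₀ : ℝ := sInf Sset with ht₀def
      have ht₀mem : t₀ ∈ Sset := hSclosed.csInf_mem hSne hSbdd
      have ht₀T : T ≤ t₀ := ht₀mem.1
      have ht₀0 : 0 < t₀ := by linarith
      have hlt : ∀ s, 0 ≤ s → s < t₀ → lA s ≤ B := by
        intro s hs0 hst
        rcases le_or_gt s T with h | h
        · exact hB₀B s ⟨hs0, h⟩
        · by_contra hcon2
          push_neg at hcon2
          have hmem : s ∈ Sset := ⟨h.le, hcon2.le⟩
          exact absurd (csInf_le hSbdd hmem) (not_le.mpr hst)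
      have ht₀B : lA t₀ ≤ B := by
        have htend : Tendsto lA (𝓝[<] t₀) (𝓝 (lA t₀)) :=
          (hcA.tendsto t₀).mono_left nhdsWithin_le_nhds
        refine le_of_tendsto htend ?_
        filter_upwards [Ioo_mem_nhdsLT_of_mem (⟨ht₀0, le_rfl⟩ : t₀ ∈ Ioc (0:ℝ) t₀)] with s hs
        exact hlt s hs.1.le hs.2
      have hb : ∀ u ∈ Icc (0:ℝ) t₀, lA u ≤ B := by
        intro u hu
        rcases eq_or_lt_of_le hu.2 with h | h
        · rw [h]; exact ht₀B
        · exact hlt u hu.1 h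
      have hk := key2 t₀ B (by linarith) hBnn hb
      have hεt := hεT t₀ ht₀T
      have hfin : lA t₀ ≤ (a + C * B) * η := by
        calc lA t₀ ≤ (a + C * B) * ΦBA ((1 - α) * convK h₂ lB t₀) := hk
          _ ≤ (a + C * B) * η := by
              apply mul_le_mul_of_nonneg_left hεt.le
              nlinarith
      have hBle : B ≤ lA t₀ := ht₀mem.2
      nlinarith [mul_le_mul_of_nonneg_right hηC hBnn]
    -- conclude lA → 0 by squeezing
    have hbAll : ∀ t, T ≤ t → ∀ u ∈ Icc (0:ℝ) t, lA u ≤ B := by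
      intro t ht u hu
      rcases le_total u T with h | h
      · exact hB₀B u ⟨hu.1, h⟩
      · exact hglobal u h
    apply squeeze_zero' (Filter.Eventually.of_forall fun t => hApos t)
      (g := fun t => (a + C * B) * ΦBA ((1 - α) * convK h₂ lB t))
    · filter_upwards [eventually_ge_atTop T] with t ht
      exact key2 t B (by linarith) hBnn (hbAll t ht)
    · have h0 := hε.const_mul (a + C * B)
      rw [mul_zero] at h0
      exact h0
  refine ⟨?_, key⟩
  -- part 1: liminf is finite
  by_contra hcon
  have htopeq : eliminf lA = ⊤ := by
    rwa [lt_top_iff_ne_top, not_ne_iff] at hcon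
  have hAtop : Tendsto lA atTop atTop := by
    rw [tendsto_atTop]
    intro M
    have hlt : (ENNReal.ofReal M) < Filter.liminf (fun t => ENNReal.ofReal (lA t)) Filter.atTop := by
      rw [show Filter.liminf (fun t => ENNReal.ofReal (lA t)) Filter.atTop = eliminf lA from rfl,
        htopeq]
      exact ENNReal.ofReal_lt_top
    filter_upwards [Filter.eventually_lt_of_lt_liminf hlt] with t hts
    by_contra h'
    push_neg at h'
    exact absurd (ENNReal.ofReal_le_ofReal h'.le) (not_le.mpr hts)
  have hl4pos : 0 < l1 h₄ := by
    have h : 0 < α * l1 h₄ := by rw [← hκ₄]; exact hk4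
    nlinarith [l1_nonneg h₄ hh₄.1]
  have hconv4 : Tendsto (fun t => convK h₄ lA t) atTop atTop :=
    conv_tendsto_atTop h₄ lA hh₄.1 hcA hApos hl4pos hAtop
  have hv : Tendsto (fun t => α * convK h₄ lA t) atTop atTop :=
    hconv4.const_mul_atTop hα0
  have hΦABtop : Tendsto (fun t => ΦAB (α * convK h₄ lA t)) atTop atTop :=
    hAB.2.2.2.2.comp hv
  have hBtop : Tendsto lB atTop atTop := by
    apply tendsto_atTop_mono' atTop ?_ hΦABtop
    filter_upwards [eventually_ge_atTop (0:ℝ)] with t ht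
    rw [heqB t ht]
    have hw : 0 ≤ (1 - α) * convK h₃ lB t :=
      mul_nonneg (by linarith) (conv_nonneg' h₃ lB hh₃.1 hBpos t ht)
    linarith [hΦBpos _ hw]
  exact not_tendsto_atTop_of_tendsto_nhds (key hBtop) hAtop
end

section
/- Suppose κ₂ > 0, κ₄ > 0, μ_B > 0 and κ₃ > 1. Then for the linear mean-field system (λ^A, λ^B): λ^B(t) → +∞ as t → ∞ and λ^A(t) → 0 as t → ∞. -/
open MeasureTheory Filter Topology Set
open scoped ENNReal

lemma l1_nonneg_s6 {h : ℝ → ℝ} (hh : ∀ u, 0 ≤ u → 0 ≤ h u) : 0 ≤ l1 h := by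
  apply setIntegral_nonneg measurableSet_Ioi
  intro x hx; exact hh x (le_of_lt hx)

lemma intInt_sub {h : ℝ → ℝ} (hint : IntegrableOn h (Set.Ioi 0))
    {t a b : ℝ} (ha : 0 ≤ a) (hab : a ≤ b) (hbt : b ≤ t) :
    IntervalIntegrable (fun u => h (t - u)) volume a b := by
  have h1 : IntervalIntegrable h volume (t - b) (t - a) := by
    rw [intervalIntegrable_iff_integrableOn_Ioc_of_le (by linarith)]
    exact hint.mono_set (fun x hx => lt_of_le_of_lt (by linarith) hx.1)
  have := (h1.comp_sub_left t).symm
  simpa [sub_sub_cancel] using this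

lemma intInt_conv {h f : ℝ → ℝ} (hint : IntegrableOn h (Set.Ioi 0))
    (hf : Continuous f) {t a b : ℝ} (ha : 0 ≤ a) (hab : a ≤ b) (hbt : b ≤ t) :
    IntervalIntegrable (fun u => h (t - u) * f u) volume a b :=
  (intInt_sub hint ha hab hbt).mul_continuousOn hf.continuousOn

lemma convK_nonneg {h f : ℝ → ℝ} (hh : ∀ u, 0 ≤ u → 0 ≤ h u)
    (hf : ∀ u, 0 ≤ f u) {t : ℝ} (ht : 0 ≤ t) : 0 ≤ convK h f t := by
  apply intervalIntegral.integral_nonneg ht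
  intro u hu
  exact mul_nonneg (hh _ (by simp at hu; linarith [hu.2])) (hf u)

lemma convK_le {h f : ℝ → ℝ} (hint : IntegrableOn h (Set.Ioi 0))
    (hh : ∀ u, 0 ≤ u → 0 ≤ h u) (hf : Continuous f)
    {M t : ℝ} (hM : 0 ≤ M) (hfM : ∀ u, 0 ≤ u → u ≤ t → f u ≤ M)
    (hfpos : ∀ u, 0 ≤ f u) (ht : 0 ≤ t) :
    convK h f t ≤ M * l1 h := by
  have step1 : convK h f t ≤ ∫ u in (0:ℝ)..t, h (t - u) * M := by
    apply intervalIntegral.integral_mono_on ht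
      (intInt_conv hint hf le_rfl ht le_rfl)
      ((intInt_sub hint le_rfl ht le_rfl).mul_const M)
    intro u hu
    exact mul_le_mul_of_nonneg_left (hfM u hu.1 hu.2) (hh _ (by linarith [hu.2]))
  have step2 : (∫ u in (0:ℝ)..t, h (t - u) * M) = M * ∫ s in (0:ℝ)..t, h s := by
    rw [intervalIntegral.integral_mul_const]
    rw [intervalIntegral.integral_comp_sub_left h t]
    simp [sub_self, mul_comm]
  have step3 : (∫ s in (0:ℝ)..t, h s) ≤ l1 h := by
    rw [intervalIntegral.integral_of_le ht]
    apply setIntegral_mono_set hint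
    · filter_upwards [ae_restrict_mem measurableSet_Ioi] with x hx using hh x (le_of_lt hx)
    · exact Eventually.of_forall (fun x hx => hx.1)
  calc convK h f t ≤ M * ∫ s in (0:ℝ)..t, h s := by rw [← step2]; exact step1
    _ ≤ M * l1 h := mul_le_mul_of_nonneg_left step3 hM

lemma convK_ge {h f : ℝ → ℝ} (hint : IntegrableOn h (Set.Ioi 0))
    (hh : ∀ u, 0 ≤ u → 0 ≤ h u) (hf : Continuous f) (hfpos : ∀ u, 0 ≤ f u)
    {c T t : ℝ} (hc : 0 ≤ c) (hT : 0 ≤ T) (hTt : T ≤ t)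
    (hcf : ∀ u, T ≤ u → u ≤ t → c ≤ f u) :
    c * ∫ s in (0:ℝ)..(t - T), h s ≤ convK h f t := by
  have hsplit : convK h f t = (∫ u in (0:ℝ)..T, h (t - u) * f u) + ∫ u in T..t, h (t - u) * f u := by
    rw [convK, ← intervalIntegral.integral_add_adjacent_intervals
      (intInt_conv hint hf le_rfl hT hTt) (intInt_conv hint hf hT hTt le_rfl)]
  have h1 : 0 ≤ ∫ u in (0:ℝ)..T, h (t - u) * f u := by
    apply intervalIntegral.integral_nonneg hT
    intro u hu
    exact mul_nonneg (hh _ (by linarith [hu.2])) (hfpos u)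
  have h2 : (∫ u in T..t, h (t - u) * c) ≤ ∫ u in T..t, h (t - u) * f u := by
    apply intervalIntegral.integral_mono_on hTt
      ((intInt_sub hint hT hTt le_rfl).mul_const c)
      (intInt_conv hint hf hT hTt le_rfl)
    intro u hu
    exact mul_le_mul_of_nonneg_left (hcf u hu.1 hu.2) (hh _ (by linarith [hu.2]))
  have h3 : (∫ u in T..t, h (t - u) * c) = c * ∫ s in (0:ℝ)..(t - T), h s := by
    rw [intervalIntegral.integral_mul_const]
    rw [intervalIntegral.integral_comp_sub_left h t]
    simp [sub_self, mul_comm]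
  linarith [h1, h2]

lemma tail_tendsto {h : ℝ → ℝ} (hint : IntegrableOn h (Set.Ioi 0)) (T : ℝ) :
    Tendsto (fun t => ∫ s in (0:ℝ)..(t - T), h s) atTop (𝓝 (l1 h)) :=
  intervalIntegral_tendsto_integral_Ioi 0 hint (tendsto_atTop_add_const_right _ _ tendsto_id)

set_option maxHeartbeats 1000000 in
/-- Full connectivity, linear system, supercritical B: `λ^B → ∞`, `λ^A → 0`. -/
theorem stmt6
    (α : ℝ) (hα : α ∈ Set.Ioo (0:ℝ) 1)
    (h₁ h₂ h₃ h₄ : ℝ → ℝ)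
    (hh₁ : KernelOK h₁) (hh₂ : KernelOK h₂) (hh₃ : KernelOK h₃) (hh₄ : KernelOK h₄)
    (κ₁ κ₂ κ₃ κ₄ : ℝ)
    (hκ₁ : κ₁ = α * l1 h₁) (hκ₂ : κ₂ = (1 - α) * l1 h₂)
    (hκ₃ : κ₃ = (1 - α) * l1 h₃) (hκ₄ : κ₄ = α * l1 h₄)
    (ΦBA ΦAB : ℝ → ℝ) (hBA : InhibOK ΦBA) (hAB : FeedOK ΦAB)
    (μA μB : ℝ) (hμA : 0 ≤ μA) (hμB : 0 < μB)
    (hk2 : 0 < κ₂) (hk4 : 0 < κ₄) (hk3 : 1 < κ₃) :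
    ∀ lA lB, IsLinSys α h₁ h₂ h₃ h₄ ΦBA ΦAB μA μB lA lB →
      Tendsto lB atTop atTop ∧ Tendsto lA atTop (𝓝 0) := by
  rintro lA lB ⟨hcA, hcB, hA0, hB0, heqA, heqB⟩
  obtain ⟨⟨hm1, hp1, hi1⟩, -⟩ := hh₁
  obtain ⟨⟨hm2, hp2, hi2⟩, -⟩ := hh₂
  obtain ⟨⟨hm3, hp3, hi3⟩, -⟩ := hh₃
  obtain ⟨⟨hm4, hp4, hi4⟩, -⟩ := hh₄
  obtain ⟨-, hBAanti, hBA0, hBAbdd, hBAtend⟩ := hBA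
  obtain ⟨-, hABmono, hAB0, hABpos, hABtend⟩ := hAB
  obtain ⟨hα0, hα1⟩ := hα
  have h1α : (0:ℝ) < 1 - α := by linarith
  have hl1h₂ : 0 < l1 h₂ := by
    by_contra h; push_neg at h; nlinarith [hk2]
  -- basic lower bound for lB
  have hBmu : ∀ t, 0 ≤ t → μB ≤ lB t := by
    intro t ht
    have hc3 : 0 ≤ convK h₃ lB t := convK_nonneg hp3 hB0 ht
    have hc4 : 0 ≤ convK h₄ lA t := convK_nonneg hp4 hA0 ht
    have hφ : 0 ≤ ΦAB (α * convK h₄ lA t) := hABpos _ (by positivity)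
    have := heqB t ht
    simp only at this
    nlinarith
  -- iterative improvement
  have step : ∀ c : ℝ, 0 ≤ c → (∀ᶠ t in atTop, c ≤ lB t) →
      (∀ᶠ t in atTop, c + μB / 2 ≤ lB t) := by
    intro c hc hev
    obtain ⟨T₀, hT₀⟩ := eventually_atTop.1 hev
    set T := max T₀ 0 with hTdef
    have hT : 0 ≤ T := le_max_right _ _
    have htail : Tendsto (fun t => (1 - α) * c * ∫ s in (0:ℝ)..(t - T), h₃ s)
        atTop (𝓝 ((1 - α) * c * l1 h₃)) := (tail_tendsto hi3 T).const_mul _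
    have hlim : κ₃ * c - μB / 2 < (1 - α) * c * l1 h₃ := by
      rw [hκ₃]; nlinarith
    filter_upwards [htail.eventually_const_lt hlim, eventually_ge_atTop T] with t hlt htT
    have hge := convK_ge hi3 hp3 hcB hB0 hc hT htT
      (fun u hu1 hu2 => hT₀ u (le_trans (le_max_left _ _) hu1))
    have hc4 : 0 ≤ convK h₄ lA t := convK_nonneg hp4 hA0 (le_trans hT htT)
    have hφ : 0 ≤ ΦAB (α * convK h₄ lA t) := hABpos _ (by positivity)
    have heq := heqB t (le_trans hT htT)
    simp only at heq
    have hmul : (1 - α) * (c * ∫ s in (0:ℝ)..(t - T), h₃ s) ≤ (1 - α) * convK h₃ lB t :=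
      mul_le_mul_of_nonneg_left hge (le_of_lt h1α)
    have hκc : c ≤ κ₃ * c := by nlinarith
    nlinarith
  -- lB tends to infinity
  have hBtop : Tendsto lB atTop atTop := by
    have hn : ∀ n : ℕ, ∀ᶠ t in atTop, μB + n * (μB / 2) ≤ lB t := by
      intro n
      induction n with
      | zero =>
        filter_upwards [eventually_ge_atTop (0:ℝ)] with t ht
        simpa using hBmu t ht
      | succ n ih =>
        have := step (μB + n * (μB / 2)) (by positivity) ih
        filter_upwards [this] with t ht
        push_cast
        linarith
    rw [tendsto_atTop]
    intro b
    obtain ⟨n, hn'⟩ := exists_nat_ge ((b - μB) / (μB / 2))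
    have hb : b ≤ μB + n * (μB / 2) := by
      rw [div_le_iff₀ (by positivity)] at hn'
      linarith
    filter_upwards [hn n] with t ht using le_trans hb ht
  -- z tends to infinity
  set z : ℝ → ℝ := fun t => (1 - α) * convK h₂ lB t with hzdef
  have hz : Tendsto z atTop atTop := by
    rw [tendsto_atTop]
    intro b
    set M := max 0 ((b + 1) / ((1 - α) * l1 h₂)) with hMdef
    have hM : 0 ≤ M := le_max_left _ _
    have hMl : b + 1 ≤ (1 - α) * M * l1 h₂ := by
      have h2 : (b + 1) / ((1 - α) * l1 h₂) ≤ M := le_max_right _ _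
      rw [div_le_iff₀ (by positivity)] at h2
      nlinarith
    obtain ⟨T₀, hT₀⟩ := eventually_atTop.1 (hBtop.eventually_ge_atTop M)
    set T := max T₀ 0 with hTdef
    have hT : 0 ≤ T := le_max_right _ _
    have htail : Tendsto (fun t => (1 - α) * M * ∫ s in (0:ℝ)..(t - T), h₂ s)
        atTop (𝓝 ((1 - α) * M * l1 h₂)) := (tail_tendsto hi2 T).const_mul _
    filter_upwards [htail.eventually_const_lt (show b < (1 - α) * M * l1 h₂ by linarith),
      eventually_ge_atTop T] with t hlt htT
    have hge := convK_ge hi2 hp2 hcB hB0 hM hT htT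
      (fun u hu1 hu2 => hT₀ u (le_trans (le_max_left _ _) hu1))
    have hmul : (1 - α) * (M * ∫ s in (0:ℝ)..(t - T), h₂ s) ≤ (1 - α) * convK h₂ lB t :=
      mul_le_mul_of_nonneg_left hge (le_of_lt h1α)
    simp only [hzdef]
    nlinarith
  have hPhiz : Tendsto (fun t => ΦBA (z t)) atTop (𝓝 0) := hBAtend.comp hz
  -- lA is bounded
  have hl1h₁ : 0 ≤ l1 h₁ := l1_nonneg_s6 hp1
  set K₁ := α * l1 h₁ with hK₁def
  have hK₁ : 0 ≤ K₁ := by positivity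
  set ε := 1 / (2 * (K₁ + 1)) with hεdef
  have hε : 0 < ε := by positivity
  have hεK : ε * K₁ ≤ 1 / 2 := by
    rw [hεdef]
    rw [div_mul_eq_mul_div, one_mul, div_le_div_iff₀ (by positivity) (by norm_num)]
    nlinarith
  obtain ⟨T₀, hT₀⟩ := eventually_atTop.1 (hPhiz.eventually_lt_const hε)
  set T := max T₀ 0 with hTdef
  have hT : 0 ≤ T := le_max_right _ _
  obtain ⟨s₀, hs₀mem, hs₀⟩ := isCompact_Icc.exists_isMaxOn
    (Set.nonempty_Icc.2 hT) hcA.continuousOn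
  set M₀ := lA s₀ with hM₀def
  set M := max M₀ (2 * ε * μA) with hMdef
  have hM₀M : M₀ ≤ M := le_max_left _ _
  have hM : 0 ≤ M := le_trans (hA0 s₀) hM₀M
  have hzpos : ∀ t, 0 ≤ t → 0 ≤ z t := fun t ht =>
    mul_nonneg (le_of_lt h1α) (convK_nonneg hp2 hB0 ht)
  have hAbd : ∀ t, 0 ≤ t → lA t ≤ M := by
    intro t ht
    by_cases htT : t ≤ T
    · exact le_trans (hs₀ ⟨ht, htT⟩) hM₀M
    · push_neg at htT
      obtain ⟨s, hsmem, hs⟩ := isCompact_Icc.exists_isMaxOn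
        (Set.nonempty_Icc.2 ht) hcA.continuousOn
      have hlAt : lA t ≤ lA s := hs ⟨ht, le_refl t⟩
      by_cases hsT : s ≤ T
      · exact le_trans hlAt (le_trans (hs₀ ⟨hsmem.1, hsT⟩) hM₀M)
      · push_neg at hsT
        have hs0 : 0 ≤ s := le_trans hT (le_of_lt hsT)
        have hΦε : ΦBA (z s) < ε := hT₀ s (le_trans (le_max_left _ _) (le_of_lt hsT))
        have hΦ0 : 0 ≤ ΦBA (z s) := (hBAbdd (z s) (hzpos s hs0)).1
        have hconv : convK h₁ lA s ≤ lA s * l1 h₁ :=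
          convK_le hi1 hp1 hcA (hA0 s)
            (fun u hu1 hu2 => hs ⟨hu1, le_trans hu2 hsmem.2⟩) hA0 hs0
        have hconv0 : 0 ≤ convK h₁ lA s := convK_nonneg hp1 hA0 hs0
        have heq := heqA s hs0
        simp only at heq
        have heq' : lA s = (μA + α * convK h₁ lA s) * ΦBA (z s) := heq
        have hεK' : ε * α * (lA s * l1 h₁) ≤ (1 / 2) * lA s := by
          have he : ε * α * (lA s * l1 h₁) = (ε * K₁) * lA s := by rw [hK₁def]; ring
          rw [he]
          exact mul_le_mul_of_nonneg_right hεK (hA0 s)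
        have hb1 : lA s ≤ (μA + α * convK h₁ lA s) * ε := by
          rw [heq']
          exact mul_le_mul_of_nonneg_left (le_of_lt hΦε) (by positivity)
        have hb2 : ε * α * convK h₁ lA s ≤ ε * α * (lA s * l1 h₁) :=
          mul_le_mul_of_nonneg_left hconv (by positivity)
        have hlAs : lA s ≤ 2 * ε * μA := by nlinarith
        exact le_trans hlAt (le_trans hlAs (le_max_right _ _))
  -- squeeze lA to 0
  constructor
  · exact hBtop
  · have hCtend : Tendsto (fun t => (μA + K₁ * M) * ΦBA (z t)) atTop (𝓝 0) := by
      have := hPhiz.const_mul (μA + K₁ * M)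
      simpa using this
    apply tendsto_of_tendsto_of_tendsto_of_le_of_le' tendsto_const_nhds hCtend
    · filter_upwards [eventually_ge_atTop (0:ℝ)] with t ht using hA0 t
    · filter_upwards [eventually_ge_atTop (0:ℝ)] with t ht
      have hconv : convK h₁ lA t ≤ M * l1 h₁ :=
        convK_le hi1 hp1 hcA hM (fun u hu1 hu2 => hAbd u hu1) hA0 ht
      have hconv0 : 0 ≤ convK h₁ lA t := convK_nonneg hp1 hA0 ht
      have hΦ0 : 0 ≤ ΦBA (z t) := (hBAbdd (z t) (hzpos t ht)).1
      have heq := heqA t ht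
      simp only at heq
      have : μA + α * convK h₁ lA t ≤ μA + K₁ * M := by
        rw [hK₁def]; nlinarith
      calc lA t = (μA + α * convK h₁ lA t) * ΦBA ((1 - α) * convK h₂ lB t) := heq
        _ ≤ (μA + K₁ * M) * ΦBA (z t) := mul_le_mul_of_nonneg_right this hΦ0
end

section
/- Suppose κ₂ > 0, κ₄ > 0 and κ₃ < 1. Then the function Φ = Ψ₂ ∘ Ψ₁ : I_{κ₁,κ₂} → [0,∞) is continuous and nonincreasing, it has a unique fixed point ℓ ∈ I_{κ₁,κ₂}, and this fixed point satisfies μ_B/(1−κ₃) ≤ ℓ. -/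
open MeasureTheory Filter Topology Set
open scoped ENNReal

/-- The fixed-point map `Φ = Ψ₂ ∘ Ψ₁` is continuous, nonincreasing, and has a
unique fixed point `ℓ` in `I_{κ₁,κ₂}`, which satisfies `μ_B/(1-κ₃) ≤ ℓ`. -/
theorem stmt7
    (α : ℝ) (hα : α ∈ Set.Ioo (0:ℝ) 1)
    (h₁ h₂ h₃ h₄ : ℝ → ℝ)
    (hh₁ : KernelL1 h₁) (hh₂ : KernelL1 h₂) (hh₃ : KernelL1 h₃) (hh₄ : KernelL1 h₄)
    (κ₁ κ₂ κ₃ κ₄ : ℝ)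
    (hκ₁ : κ₁ = α * l1 h₁) (hκ₂ : κ₂ = (1 - α) * l1 h₂)
    (hκ₃ : κ₃ = (1 - α) * l1 h₃) (hκ₄ : κ₄ = α * l1 h₄)
    (ΦBA ΦAB : ℝ → ℝ) (hBA : InhibOK ΦBA) (hAB : FeedOK ΦAB)
    (μA μB : ℝ) (hμA : 0 < μA) (hμB : 0 ≤ μB)
    (hk2 : 0 < κ₂) (hk4 : 0 < κ₄) (hk3 : κ₃ < 1) :
    ContinuousOn (PhiMap μA μB κ₁ κ₂ κ₃ κ₄ ΦBA ΦAB) (Idom κ₁ κ₂ ΦBA) ∧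
    AntitoneOn (PhiMap μA μB κ₁ κ₂ κ₃ κ₄ ΦBA ΦAB) (Idom κ₁ κ₂ ΦBA) ∧
    ∃ ℓ ∈ Idom κ₁ κ₂ ΦBA,
      PhiMap μA μB κ₁ κ₂ κ₃ κ₄ ΦBA ΦAB ℓ = ℓ ∧
      μB / (1 - κ₃) ≤ ℓ ∧
      ∀ x ∈ Idom κ₁ κ₂ ΦBA, PhiMap μA μB κ₁ κ₂ κ₃ κ₄ ΦBA ΦAB x = x → x = ℓ := by
  obtain ⟨⟨K, hK0, hKlip⟩, hanti, hBA0, hbnd, htend0⟩ := hBA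
  obtain ⟨⟨K', hK'0, hK'lip⟩, hmono, hAB0, hABnn, htendtop⟩ := hAB
  have hl1 : 0 ≤ l1 h₁ :=
    setIntegral_nonneg measurableSet_Ioi fun x hx => hh₁.2.1 x (le_of_lt hx)
  have hκ₁0 : 0 ≤ κ₁ := by rw [hκ₁]; exact mul_nonneg hα.1.le hl1
  have c13 : 0 < 1 - κ₃ := by linarith
  set I := Idom κ₁ κ₂ ΦBA with hIdef
  set Φ := PhiMap μA μB κ₁ κ₂ κ₃ κ₄ ΦBA ΦAB with hΦdef
  have hmemI : ∀ x : ℝ, x ∈ I ↔ 0 ≤ x ∧ κ₁ * ΦBA (κ₂ * x) < 1 := fun x => Iff.rfl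
  have hIsub : I ⊆ Ici 0 := fun x hx => hx.1
  have hup : ∀ x ∈ I, ∀ y, x ≤ y → y ∈ I := by
    intro x hx y hxy
    have hx0 : (0:ℝ) ≤ x := hx.1
    have h0y : (0:ℝ) ≤ y := le_trans hx0 hxy
    refine ⟨h0y, lt_of_le_of_lt ?_ hx.2⟩
    have := hanti (mem_Ici.mpr (mul_nonneg hk2.le hx0)) (mem_Ici.mpr (mul_nonneg hk2.le h0y))
      (mul_le_mul_of_nonneg_left hxy hk2.le)
    exact mul_le_mul_of_nonneg_left this hκ₁0
  -- continuity of kernels on Ici 0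
  have cBA : ContinuousOn ΦBA (Ici 0) := by
    have : LipschitzOnWith (Real.toNNReal K) ΦBA (Ici 0) := by
      apply LipschitzOnWith.of_dist_le_mul
      intro x hx y hy
      rw [Real.dist_eq, Real.dist_eq, Real.coe_toNNReal K hK0]
      exact hKlip x y hx hy
    exact this.continuousOn
  have cAB : ContinuousOn ΦAB (Ici 0) := by
    have : LipschitzOnWith (Real.toNNReal K') ΦAB (Ici 0) := by
      apply LipschitzOnWith.of_dist_le_mul
      intro x hx y hy
      rw [Real.dist_eq, Real.dist_eq, Real.coe_toNNReal K' hK'0]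
      exact hK'lip x y hx hy
    exact this.continuousOn
  have hden : ∀ x ∈ I, 0 < 1 - κ₁ * ΦBA (κ₂ * x) := fun x hx => by linarith [hx.2]
  have hBAnn : ∀ x ∈ I, 0 ≤ ΦBA (κ₂ * x) := fun x hx =>
    (hbnd (κ₂ * x) (mul_nonneg hk2.le hx.1)).1
  have hΨ₁nn : ∀ x ∈ I, 0 ≤ Psi1 μA κ₁ κ₂ ΦBA x := by
    intro x hx
    exact div_nonneg (mul_nonneg hμA.le (hBAnn x hx)) (hden x hx).le
  have hcmul : ContinuousOn (fun x : ℝ => ΦBA (κ₂ * x)) I := by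
    apply cBA.comp ((continuous_const.mul continuous_id).continuousOn)
    intro x hx
    exact mem_Ici.mpr (mul_nonneg hk2.le hx.1)
  have contΨ₁ : ContinuousOn (Psi1 μA κ₁ κ₂ ΦBA) I := by
    apply ContinuousOn.div (continuousOn_const.mul hcmul)
      (continuousOn_const.sub (continuousOn_const.mul hcmul))
    intro x hx
    exact ne_of_gt (hden x hx)
  have antiΨ₁ : AntitoneOn (Psi1 μA κ₁ κ₂ ΦBA) I := by
    intro x hx y hy hxy
    have hq_le_p : ΦBA (κ₂ * y) ≤ ΦBA (κ₂ * x) :=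
      hanti (mem_Ici.mpr (mul_nonneg hk2.le hx.1)) (mem_Ici.mpr (mul_nonneg hk2.le hy.1))
        (mul_le_mul_of_nonneg_left hxy hk2.le)
    have hdx := hden x hx
    have hdy := hden y hy
    have hq0 := hBAnn y hy
    rw [Psi1, Psi1, div_le_div_iff₀ hdy hdx]
    nlinarith [mul_le_mul_of_nonneg_left hq_le_p hμA.le]
  have contΨ₂ : ContinuousOn (Psi2 μB κ₃ κ₄ ΦAB) (Ici 0) := by
    apply ContinuousOn.div_const
    apply ContinuousOn.add continuousOn_const
    apply cAB.comp ((continuous_const.mul continuous_id).continuousOn)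
    intro x hx
    exact mem_Ici.mpr (mul_nonneg hk4.le hx)
  have monoΨ₂ : MonotoneOn (Psi2 μB κ₃ κ₄ ΦAB) (Ici 0) := by
    intro x hx y hy hxy
    have : ΦAB (κ₄ * x) ≤ ΦAB (κ₄ * y) :=
      hmono (mem_Ici.mpr (mul_nonneg hk4.le hx)) (mem_Ici.mpr (mul_nonneg hk4.le hy))
        (mul_le_mul_of_nonneg_left hxy hk4.le)
    exact div_le_div_of_nonneg_right (by linarith) c13.le |>.trans_eq rfl
  have hmaps : MapsTo (Psi1 μA κ₁ κ₂ ΦBA) I (Ici 0) := fun x hx => mem_Ici.mpr (hΨ₁nn x hx)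
  have contΦ : ContinuousOn Φ I := contΨ₂.comp contΨ₁ hmaps
  have antiΦ : AntitoneOn Φ I := by
    intro x hx y hy hxy
    exact monoΨ₂ (hmaps hy) (hmaps hx) (antiΨ₁ hx hy hxy)
  have hlow : ∀ x ∈ I, μB / (1 - κ₃) ≤ Φ x := by
    intro x hx
    have h1 : 0 ≤ ΦAB (κ₄ * Psi1 μA κ₁ κ₂ ΦBA x) :=
      hABnn _ (mul_nonneg hk4.le (hΨ₁nn x hx))
    have : μB ≤ μB + ΦAB (κ₄ * Psi1 μA κ₁ κ₂ ΦBA x) := by linarith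
    exact div_le_div_of_nonneg_right this c13.le |>.trans_eq rfl
  -- I is nonempty
  have hItend : Tendsto (fun x : ℝ => κ₁ * ΦBA (κ₂ * x)) atTop (𝓝 (κ₁ * 0)) := by
    apply Tendsto.const_mul
    exact htend0.comp (Tendsto.const_mul_atTop hk2 tendsto_id)
  have hIne : ∃ c, c ∈ I := by
    rw [mul_zero] at hItend
    have h1 : ∀ᶠ x : ℝ in atTop, κ₁ * ΦBA (κ₂ * x) < 1 :=
      hItend.eventually_lt_const one_pos
    obtain ⟨c, hc1, hc2⟩ := (h1.and (eventually_ge_atTop (0:ℝ))).exists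
    exact ⟨c, hc2, hc1⟩
  obtain ⟨c, hc⟩ := hIne
  -- upper point b with Φ b ≤ b
  set b := max c (Φ c) with hbdef
  have hbI : b ∈ I := hup c hc b (le_max_left _ _)
  have hΦb : Φ b ≤ b := le_trans (antiΦ hc hbI (le_max_left _ _)) (le_max_right _ _)
  -- lower point a' with a' ≤ Φ a'
  have hcmul0 : ContinuousOn (fun x : ℝ => ΦBA (κ₂ * x)) (Ici 0) := by
    apply cBA.comp ((continuous_const.mul continuous_id).continuousOn)
    intro x hx
    exact mem_Ici.mpr (mul_nonneg hk2.le hx)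
  have hlower : ∃ a' ∈ I, a' ≤ Φ a' := by
    by_cases hx0 : μB / (1 - κ₃) ∈ I
    · exact ⟨μB / (1 - κ₃), hx0, hlow _ hx0⟩
    · -- blow-up near inf I
      have hx0nn : 0 ≤ μB / (1 - κ₃) := div_nonneg hμB c13.le
      set a := sInf I with hadef
      have hbdd : BddBelow I := ⟨0, fun x hx => hx.1⟩
      have hIne' : I.Nonempty := ⟨c, hc⟩
      have ha0 : 0 ≤ a := le_csInf hIne' fun x hx => hx.1
      have hx0a : μB / (1 - κ₃) ≤ a := by
        apply le_csInf hIne'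
        intro x hx
        by_contra h
        push_neg at h
        exact hx0 (hup x hx _ h.le)
      have hkey : 1 ≤ κ₁ * ΦBA (κ₂ * a) := by
        by_cases haI : a ∈ I
        · exfalso
          rcases eq_or_lt_of_le ha0 with h0a | h0a
          · exact hx0 (by rwa [le_antisymm hx0a (h0a ▸ hx0nn)])
          · -- a > 0 : left limit argument
            have hne : (0:ℝ) ≠ a := ne_of_lt h0a
            have hcl : a ∈ closure (Ico 0 a) := by
              rw [closure_Ico hne]
              exact ⟨ha0, le_rfl⟩
            haveI : (𝓝[Ico (0:ℝ) a] a).NeBot := mem_closure_iff_nhdsWithin_neBot.mp hcl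
            have htt : Tendsto (fun x : ℝ => κ₁ * ΦBA (κ₂ * x)) (𝓝[Ico (0:ℝ) a] a)
                (𝓝 (κ₁ * ΦBA (κ₂ * a))) := by
              apply Tendsto.const_mul
              exact ((hcmul0 a (mem_Ici.mpr ha0)).mono Ico_subset_Ici_self).tendsto
            have hev : ∀ᶠ x in 𝓝[Ico (0:ℝ) a] a, 1 ≤ κ₁ * ΦBA (κ₂ * x) := by
              filter_upwards [self_mem_nhdsWithin] with x hx
              by_contra h
              push_neg at h
              have : x ∈ I := ⟨hx.1, h⟩
              exact absurd (csInf_le hbdd this) (not_le.mpr hx.2)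
            have : 1 ≤ κ₁ * ΦBA (κ₂ * a) := ge_of_tendsto htt hev
            linarith [haI.2]
        · by_contra h
          push_neg at h
          exact haI ⟨ha0, h⟩
      have hBAa_pos : 0 < ΦBA (κ₂ * a) := by nlinarith
      have hcl : a ∈ closure I := csInf_mem_closure hIne' hbdd
      haveI : (𝓝[I] a).NeBot := mem_closure_iff_nhdsWithin_neBot.mp hcl
      have hdt : Tendsto (fun x : ℝ => 1 - κ₁ * ΦBA (κ₂ * x)) (𝓝[I] a)
          (𝓝 (1 - κ₁ * ΦBA (κ₂ * a))) := by
        apply Tendsto.const_sub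
        apply Tendsto.const_mul
        exact ((hcmul0 a (mem_Ici.mpr ha0)).mono hIsub).tendsto
      have hd0 : 1 - κ₁ * ΦBA (κ₂ * a) = 0 := by
        have hle : 1 - κ₁ * ΦBA (κ₂ * a) ≤ 0 := by linarith
        have hge : 0 ≤ 1 - κ₁ * ΦBA (κ₂ * a) := by
          apply ge_of_tendsto hdt
          filter_upwards [self_mem_nhdsWithin] with x hx
          exact (hden x hx).le
        linarith
      have hdt' : Tendsto (fun x : ℝ => 1 - κ₁ * ΦBA (κ₂ * x)) (𝓝[I] a) (𝓝[>] 0) := by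
        rw [tendsto_nhdsWithin_iff]
        constructor
        · rwa [hd0] at hdt
        · filter_upwards [self_mem_nhdsWithin] with x hx
          exact hden x hx
      have hnum : Tendsto (fun x : ℝ => μA * ΦBA (κ₂ * x)) (𝓝[I] a)
          (𝓝 (μA * ΦBA (κ₂ * a))) := by
        apply Tendsto.const_mul
        exact ((hcmul0 a (mem_Ici.mpr ha0)).mono hIsub).tendsto
      have hΨ₁t : Tendsto (Psi1 μA κ₁ κ₂ ΦBA) (𝓝[I] a) atTop := by
        have := Tendsto.pos_mul_atTop (mul_pos hμA hBAa_pos) hnum hdt'.inv_tendsto_nhdsGT_zero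
        refine this.congr fun x => ?_
        simp only [Pi.inv_apply, Psi1, div_eq_mul_inv]
      have hΦt : Tendsto Φ (𝓝[I] a) atTop := by
        have t1 : Tendsto (fun x => κ₄ * Psi1 μA κ₁ κ₂ ΦBA x) (𝓝[I] a) atTop :=
          hΨ₁t.const_mul_atTop hk4
        have t2 := htendtop.comp t1
        have t3 := tendsto_atTop_add_const_left _ μB t2
        exact t3.atTop_div_const c13
      have hev1 : ∀ᶠ x in 𝓝[I] a, a + 1 < Φ x := hΦt.eventually_gt_atTop (a + 1)
      have hev2 : ∀ᶠ x in 𝓝[I] a, x < a + 1 := by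
        apply Filter.Eventually.filter_mono nhdsWithin_le_nhds
        exact Filter.Tendsto.eventually_lt_const (by linarith) tendsto_id
      obtain ⟨x, ⟨hx1, hx2⟩, hx3⟩ := ((hev1.and hev2).and self_mem_nhdsWithin).exists
      exact ⟨x, hx3, by linarith⟩
  obtain ⟨a', ha'I, ha'le⟩ := hlower
  have ha'b : a' ≤ b := by
    by_contra h
    push_neg at h
    have := antiΦ hbI ha'I h.le
    linarith [hΦb, ha'le]
  -- IVT
  have hIcc : Icc a' b ⊆ I := fun x hx => hup a' ha'I x hx.1
  have contg : ContinuousOn (fun x => Φ x - x) (Icc a' b) :=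
    (contΦ.mono hIcc).sub continuousOn_id
  have hivt := intermediate_value_Icc' ha'b contg
  have h0mem : (0:ℝ) ∈ Icc (Φ b - b) (Φ a' - a') := ⟨by linarith, by linarith⟩
  obtain ⟨ℓ, hℓmem, hgℓ⟩ := hivt h0mem
  have hℓI : ℓ ∈ I := hIcc hℓmem
  have hfix : Φ ℓ = ℓ := by
    have : Φ ℓ - ℓ = 0 := hgℓ
    linarith
  refine ⟨contΦ, antiΦ, ℓ, hℓI, hfix, ?_, ?_⟩
  · calc μB / (1 - κ₃) ≤ Φ ℓ := hlow ℓ hℓI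
      _ = ℓ := hfix
  · intro x hx hfx
    by_contra hne
    rcases lt_or_gt_of_ne hne with h | h
    · have := antiΦ hx hℓI h.le
      rw [hfx, hfix] at this
      linarith
    · have := antiΦ hℓI hx h.le
      rw [hfx, hfix] at this
      linarith
end

section
/- Suppose κ₂ > 0, κ₄ > 0, κ₃ < 1 and μ_A > 0. If λ^A(t) converges as t → ∞ to a finite limit ℓ_A, then λ^B(t) converges as t → ∞ to Ψ₂(ℓ_A) = (μ_B + Φ_{A→B}(κ₄ ℓ_A)) / (1−κ₃). -/
open MeasureTheory Filter Topology Set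
open scoped ENNReal

namespace Aux9

variable {h f : ℝ → ℝ}

lemma l1_nonneg (hk : KernelL1 h) : 0 ≤ l1 h :=
  setIntegral_nonneg measurableSet_Ioi fun u hu => hk.2.1 u (le_of_lt hu)

lemma kii (hk : KernelL1 h) {a b : ℝ} (ha : 0 ≤ a) (hab : a ≤ b) :
    IntervalIntegrable h volume a b := by
  rw [intervalIntegrable_iff_integrableOn_Ioc_of_le hab]
  exact hk.2.2.mono_set fun x hx => lt_of_le_of_lt ha hx.1

lemma kii_sub (hk : KernelL1 h) {a b t : ℝ} (hab : a ≤ b) (hb : b ≤ t) :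
    IntervalIntegrable (fun u => h (t - u)) volume a b := by
  have := ((kii hk (a := t - b) (b := t - a) (by linarith) (by linarith)).comp_sub_left t).symm
  simpa using this

lemma convInt (hk : KernelL1 h) (hf : Continuous f) {a b t : ℝ} (hab : a ≤ b) (hb : b ≤ t) :
    IntervalIntegrable (fun u => h (t - u) * f u) volume a b :=
  (kii_sub hk hab hb).mul_continuousOn hf.continuousOn

/-- `∫_a^b h(t-u) du = ∫_{t-b}^{t-a} h`. -/
lemma sub_swap (h : ℝ → ℝ) (a b t : ℝ) :
    (∫ u in a..b, h (t - u)) = ∫ s in (t - b)..(t - a), h s :=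
  intervalIntegral.integral_comp_sub_left h t

lemma int0a_nonneg (hk : KernelL1 h) {a : ℝ} (ha : 0 ≤ a) :
    0 ≤ ∫ s in (0:ℝ)..a, h s :=
  intervalIntegral.integral_nonneg ha (fun u hu => hk.2.1 u hu.1)

lemma int_Ioc_le_l1 (hk : KernelL1 h) {a b : ℝ} (ha : 0 ≤ a) (hab : a ≤ b) :
    (∫ s in a..b, h s) ≤ l1 h := by
  rw [intervalIntegral.integral_of_le hab]
  refine setIntegral_mono_set hk.2.2 ?_ ?_
  · filter_upwards [ae_restrict_mem measurableSet_Ioi] with x hx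
    exact hk.2.1 x (le_of_lt hx)
  · refine HasSubset.Subset.eventuallyLE fun x hx => lt_of_le_of_lt ha hx.1

lemma int_le_tail (hk : KernelL1 h) {a b : ℝ} (ha : 0 ≤ a) (hab : a ≤ b) :
    (∫ s in a..b, h s) ≤ ∫ s in Set.Ioi a, h s := by
  rw [intervalIntegral.integral_of_le hab]
  refine setIntegral_mono_set (hk.2.2.mono_set (Ioi_subset_Ioi ha)) ?_ ?_
  · filter_upwards [ae_restrict_mem measurableSet_Ioi] with x hx
    exact hk.2.1 x (le_of_lt (lt_of_le_of_lt ha hx))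
  · exact HasSubset.Subset.eventuallyLE fun x hx => hx.1

lemma piece_bound (hk : KernelL1 h) (hf : Continuous f) {a b t C : ℝ}
    (hab : a ≤ b) (hbt : b ≤ t) (hC : ∀ u ∈ Set.Icc a b, |f u| ≤ C) :
    |∫ u in a..b, h (t - u) * f u| ≤ C * ∫ s in (t - b)..(t - a), h s := by
  have key : |∫ u in a..b, h (t - u) * f u| ≤ ∫ u in a..b, h (t - u) * C := by
    refine (intervalIntegral.abs_integral_le_integral_abs hab).trans ?_
    refine intervalIntegral.integral_mono_on hab ((convInt hk hf hab hbt).abs)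
      ((kii_sub hk hab hbt).mul_const C) fun u hu => ?_
    rw [abs_mul, abs_of_nonneg (hk.2.1 _ (by linarith [hu.2]))]
    exact mul_le_mul_of_nonneg_left (hC u hu) (hk.2.1 _ (by linarith [hu.2]))
  calc |∫ u in a..b, h (t - u) * f u| ≤ ∫ u in a..b, h (t - u) * C := key
    _ = (∫ u in a..b, h (t - u)) * C := by rw [intervalIntegral.integral_mul_const]
    _ = C * ∫ s in (t - b)..(t - a), h s := by rw [sub_swap]; ring

lemma conv_abs_bound (hk : KernelL1 h) (hf : Continuous f) {t M : ℝ} (ht : 0 ≤ t)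
    (hM : ∀ u, 0 ≤ u → |f u| ≤ M) : |convK h f t| ≤ l1 h * M := by
  have hM0 : 0 ≤ M := le_trans (abs_nonneg _) (hM 0 le_rfl)
  have key := piece_bound hk hf (a := 0) (b := t) (t := t) (C := M) ht le_rfl
    (fun u hu => hM u hu.1)
  simp only [sub_zero, sub_self] at key
  refine key.trans ?_
  rw [mul_comm (l1 h) M]
  exact mul_le_mul_of_nonneg_left (int_le_tail hk le_rfl ht) hM0

lemma conv_nonneg (hk : KernelL1 h) (hpos : ∀ u, 0 ≤ u → 0 ≤ f u) {t : ℝ} (ht : 0 ≤ t) :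
    0 ≤ convK h f t :=
  intervalIntegral.integral_nonneg ht fun u hu =>
    mul_nonneg (hk.2.1 _ (by linarith [hu.2])) (hpos u hu.1)

lemma conv_abs_bound_Icc (hk : KernelL1 h) (hf : Continuous f) {t M : ℝ} (ht : 0 ≤ t)
    (hM0 : 0 ≤ M) (hM : ∀ u ∈ Set.Icc 0 t, |f u| ≤ M) : |convK h f t| ≤ l1 h * M := by
  have key := piece_bound hk hf (a := 0) (b := t) (t := t) (C := M) ht le_rfl hM
  simp only [sub_zero, sub_self] at key
  refine key.trans ?_
  rw [mul_comm (l1 h) M]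
  exact mul_le_mul_of_nonneg_left (int_le_tail hk le_rfl ht) hM0

lemma conv_add_const (hk : KernelL1 h) (hf : Continuous f) {t c : ℝ} (ht : 0 ≤ t) :
    convK h (fun u => f u + c) t = convK h f t + c * ∫ s in (0:ℝ)..t, h s := by
  unfold convK
  simp only [mul_add]
  rw [intervalIntegral.integral_add (convInt hk hf ht le_rfl)
    ((kii_sub hk ht le_rfl).mul_const c)]
  have e2 : (∫ u in (0:ℝ)..t, h (t - u) * c) = c * ∫ s in (0:ℝ)..t, h s := by
    rw [intervalIntegral.integral_mul_const, sub_swap]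
    simp only [sub_self, sub_zero]
    ring
  rw [e2]

/-- tail of an integrable kernel tends to 0 -/
lemma tail_tendsto (hk : KernelL1 h) :
    Tendsto (fun a => ∫ s in Set.Ioi a, h s) atTop (𝓝 0) := by
  have h1 : Tendsto (fun a => ∫ s in (0:ℝ)..a, h s) atTop (𝓝 (l1 h)) :=
    intervalIntegral_tendsto_integral_Ioi 0 hk.2.2 tendsto_id
  have h2 : Tendsto (fun a => l1 h - ∫ s in (0:ℝ)..a, h s) atTop (𝓝 (l1 h - l1 h)) :=
    tendsto_const_nhds.sub h1
  rw [sub_self] at h2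
  refine h2.congr' ?_
  filter_upwards [eventually_ge_atTop (0:ℝ)] with a ha
  have hsplit : (∫ s in Set.Ioi (0:ℝ), h s) = (∫ s in Set.Ioc 0 a, h s) + ∫ s in Set.Ioi a, h s := by
    rw [← setIntegral_union (Set.Ioc_disjoint_Ioi le_rfl) measurableSet_Ioi
      (hk.2.2.mono_set (fun x hx => hx.1)) (hk.2.2.mono_set (fun x hx => lt_of_le_of_lt ha hx))]
    rw [Set.Ioc_union_Ioi_eq_Ioi ha]
  rw [intervalIntegral.integral_of_le ha]
  simp only [l1] at hsplit ⊢
  linarith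

/-- Key tail estimate: if `|f| ≤ B` eventually and `|f| ≤ M` on `[0,∞)`, then
`|convK h f t| ≤ l1 h * B + ε` eventually. -/
lemma tailBound (hk : KernelL1 h) (hf : Continuous f) {M B ε : ℝ}
    (hM : ∀ u, 0 ≤ u → |f u| ≤ M) (hB : 0 ≤ B)
    (hev : ∀ᶠ u in atTop, |f u| ≤ B) (hε : 0 < ε) :
    ∀ᶠ t in atTop, |convK h f t| ≤ l1 h * B + ε := by
  obtain ⟨T₀, hT₀⟩ := hev.exists_forall_of_atTop
  set T := max T₀ 0 with hT
  have hT0 : 0 ≤ T := le_max_right _ _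
  have hM0 : 0 ≤ M := le_trans (abs_nonneg _) (hM 0 le_rfl)
  have htail : Tendsto (fun t => M * ∫ s in Set.Ioi (t - T), h s) atTop (𝓝 (M * 0)) :=
    ((tail_tendsto hk).comp (tendsto_atTop_add_const_right atTop (-T) tendsto_id)).const_mul M
  rw [mul_zero] at htail
  have hev2 : ∀ᶠ t in atTop, M * (∫ s in Set.Ioi (t - T), h s) ≤ ε :=
    htail.eventually (eventually_le_nhds hε)
  filter_upwards [eventually_ge_atTop T, hev2] with t ht htε
  have hsplit : convK h f t =
      (∫ u in (0:ℝ)..T, h (t - u) * f u) + ∫ u in T..t, h (t - u) * f u := by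
    rw [convK, intervalIntegral.integral_add_adjacent_intervals
      (convInt hk hf hT0 ht)
      (convInt hk hf ht le_rfl)]
  have hA : |∫ u in (0:ℝ)..T, h (t - u) * f u| ≤ ε := by
    have p1 := piece_bound hk hf (a := 0) (b := T) (t := t) (C := M) hT0 ht
      (fun u hu => hM u hu.1)
    simp only [sub_zero] at p1
    refine p1.trans (le_trans ?_ htε)
    exact mul_le_mul_of_nonneg_left (int_le_tail hk (by linarith) (by linarith)) hM0
  have hB' : |∫ u in T..t, h (t - u) * f u| ≤ l1 h * B := by
    have p2 := piece_bound hk hf (a := T) (b := t) (t := t) (C := B) ht le_rfl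
      (fun u hu => hT₀ u (le_trans (le_max_left _ _) hu.1))
    simp only [sub_self] at p2
    refine p2.trans ?_
    rw [mul_comm (l1 h) B]
    exact mul_le_mul_of_nonneg_left (int_le_tail hk le_rfl (by linarith)) hB
  calc |convK h f t| ≤ |∫ u in (0:ℝ)..T, h (t - u) * f u| + |∫ u in T..t, h (t - u) * f u| := by
        rw [hsplit]; exact abs_add_le _ _
    _ ≤ ε + l1 h * B := add_le_add hA hB'
    _ = l1 h * B + ε := by ring

lemma bounded_of_tendsto (hf : Continuous f) {l : ℝ} (hl : Tendsto f atTop (𝓝 l)) :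
    ∃ M, 0 ≤ M ∧ ∀ u, 0 ≤ u → |f u| ≤ M := by
  obtain ⟨T, hT⟩ := (hl.abs.eventually (eventually_le_nhds (lt_add_one |l|))).exists_forall_of_atTop
  obtain ⟨C, hC⟩ := (isCompact_Icc (a := (0:ℝ)) (b := max T 0)).exists_bound_of_continuousOn
    hf.continuousOn
  refine ⟨max (|l| + 1) C, le_trans (by positivity) (le_max_left _ _), fun u hu => ?_⟩
  rcases le_or_gt u (max T 0) with h1 | h1
  · exact le_trans (by simpa using hC u ⟨hu, h1⟩) (le_max_right _ _)
  · exact le_trans (hT u (le_trans (le_max_left _ _) h1.le)) (le_max_left _ _)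

lemma conv_tendsto_zero (hk : KernelL1 h) (hf : Continuous f)
    (h0 : Tendsto f atTop (𝓝 0)) : Tendsto (fun t => convK h f t) atTop (𝓝 0) := by
  obtain ⟨M, hM0, hM⟩ := bounded_of_tendsto hf h0
  rw [NormedAddCommGroup.tendsto_nhds_zero]
  intro ε hε
  have hl1 : 0 ≤ l1 h := l1_nonneg hk
  set B := ε / (2 * (l1 h + 1)) with hB
  have hBpos : 0 < B := by positivity
  have hev : ∀ᶠ u in atTop, |f u| ≤ B := by
    have := h0.abs
    rw [abs_zero] at this
    exact this.eventually (eventually_le_nhds hBpos)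
  filter_upwards [tailBound hk hf hM hBpos.le hev (by positivity : (0:ℝ) < ε / 4)] with t htb
  have h1 : l1 h * B ≤ ε / 2 := by
    have : l1 h * B ≤ (l1 h + 1) * B := by nlinarith
    rw [hB] at this ⊢
    calc l1 h * (ε / (2 * (l1 h + 1))) ≤ (l1 h + 1) * (ε / (2 * (l1 h + 1))) := this
      _ = ε / 2 := by field_simp
  calc ‖convK h f t‖ = |convK h f t| := rfl
    _ ≤ l1 h * B + ε / 4 := htb
    _ < ε := by linarith

lemma conv_tendsto (hk : KernelL1 h) (hf : Continuous f) {l : ℝ}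
    (hl : Tendsto f atTop (𝓝 l)) :
    Tendsto (fun t => convK h f t) atTop (𝓝 (l1 h * l)) := by
  have hg : Continuous fun u => f u - l := hf.sub continuous_const
  have hg0 : Tendsto (fun u => f u - l) atTop (𝓝 0) := by
    simpa using hl.sub_const l
  have main : Tendsto (fun t => convK h (fun u => f u - l) t + l * ∫ s in (0:ℝ)..t, h s)
      atTop (𝓝 (0 + l * l1 h)) :=
    (conv_tendsto_zero hk hg hg0).add
      ((intervalIntegral_tendsto_integral_Ioi 0 hk.2.2 tendsto_id).const_mul l)
  rw [zero_add, mul_comm l (l1 h)] at main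
  refine main.congr' ?_
  filter_upwards [eventually_ge_atTop (0:ℝ)] with t ht
  rw [← conv_add_const hk hg ht]
  simp

end Aux9

/-- Full connectivity, subcritical B: if `λ^A` converges to `ℓ_A` then `λ^B`
converges to `Ψ₂(ℓ_A)`. -/
theorem stmt9
    (α : ℝ) (hα : α ∈ Set.Ioo (0:ℝ) 1)
    (h₁ h₂ h₃ h₄ : ℝ → ℝ)
    (hh₁ : KernelOK h₁) (hh₂ : KernelOK h₂) (hh₃ : KernelOK h₃) (hh₄ : KernelOK h₄)
    (κ₁ κ₂ κ₃ κ₄ : ℝ)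
    (hκ₁ : κ₁ = α * l1 h₁) (hκ₂ : κ₂ = (1 - α) * l1 h₂)
    (hκ₃ : κ₃ = (1 - α) * l1 h₃) (hκ₄ : κ₄ = α * l1 h₄)
    (ΦBA ΦAB : ℝ → ℝ) (hBA : InhibOK ΦBA) (hAB : FeedOK ΦAB)
    (μA μB : ℝ) (hμA : 0 < μA) (hμB : 0 ≤ μB)
    (hk2 : 0 < κ₂) (hk4 : 0 < κ₄) (hk3 : κ₃ < 1) :
    ∀ lA lB, IsLinSys α h₁ h₂ h₃ h₄ ΦBA ΦAB μA μB lA lB →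
      ∀ ℓA : ℝ, Tendsto lA atTop (𝓝 ℓA) →
        Tendsto lB atTop (𝓝 ((μB + ΦAB (κ₄ * ℓA)) / (1 - κ₃))) := by
  intro lA lB hsys ℓA hlA
  obtain ⟨hα0, hα1⟩ := hα
  obtain ⟨hcA, hcB, hposA, hposB, heqA, heqB⟩ := hsys
  obtain ⟨⟨K, hK0, hKlip⟩, hABmono, hAB0, hABpos, hABtop⟩ := hAB
  have k₃ := hh₃.1
  have k₄ := hh₄.1
  have hℓA : 0 ≤ ℓA := ge_of_tendsto hlA (Eventually.of_forall hposA)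
  have hl1₃ : 0 ≤ l1 h₃ := Aux9.l1_nonneg k₃
  have hl1₄ : 0 ≤ l1 h₄ := Aux9.l1_nonneg k₄
  have hρ0 : 0 ≤ κ₃ := by rw [hκ₃]; exact mul_nonneg (by linarith) hl1₃
  have h1κ : 0 < 1 - κ₃ := by linarith
  -- convergence of the feedback argument
  have hargpos : ∀ t, 0 ≤ t → 0 ≤ α * convK h₄ lA t := fun t ht =>
    mul_nonneg hα0.le (Aux9.conv_nonneg k₄ (fun u _ => hposA u) ht)
  have harg : Tendsto (fun t => α * convK h₄ lA t) atTop (𝓝 (κ₄ * ℓA)) := by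
    have h1 := (Aux9.conv_tendsto k₄ hcA hlA).const_mul α
    have : κ₄ * ℓA = α * (l1 h₄ * ℓA) := by rw [hκ₄]; ring
    rw [this]; exact h1
  have hgc : Tendsto (fun t => ΦAB (α * convK h₄ lA t)) atTop (𝓝 (ΦAB (κ₄ * ℓA))) := by
    rw [tendsto_iff_dist_tendsto_zero]
    have hg0 : Tendsto (fun t => K * |α * convK h₄ lA t - κ₄ * ℓA|) atTop (𝓝 0) := by
      have h1 : Tendsto (fun t => α * convK h₄ lA t - κ₄ * ℓA) atTop (𝓝 0) := by
        simpa using harg.sub_const (κ₄ * ℓA)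
      simpa using h1.abs.const_mul K
    refine squeeze_zero' (Eventually.of_forall fun t => dist_nonneg) ?_ hg0
    filter_upwards [eventually_ge_atTop (0:ℝ)] with t ht
    rw [Real.dist_eq]
    exact hKlip _ _ (hargpos t ht) (mul_nonneg hk4.le hℓA)
  -- bound on lA and on the forcing term
  obtain ⟨MA, hMA0, hMA⟩ := Aux9.bounded_of_tendsto hcA hlA
  set G := μB + ΦAB (α * (l1 h₄ * MA)) with hGdef
  have hargG : 0 ≤ α * (l1 h₄ * MA) := mul_nonneg hα0.le (mul_nonneg hl1₄ hMA0)
  have hG0 : 0 ≤ G := add_nonneg hμB (hABpos _ hargG)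
  have hg_le : ∀ t, 0 ≤ t → μB + ΦAB (α * convK h₄ lA t) ≤ G := by
    intro t ht
    have h1 : |convK h₄ lA t| ≤ l1 h₄ * MA := Aux9.conv_abs_bound k₄ hcA ht hMA
    have h2 : α * convK h₄ lA t ≤ α * (l1 h₄ * MA) :=
      mul_le_mul_of_nonneg_left (le_of_abs_le h1) hα0.le
    exact add_le_add_right (hABmono (hargpos t ht) hargG h2) μB
  -- boundedness of lB
  have hBddB : ∀ t, 0 ≤ t → lB t ≤ G / (1 - κ₃) := by
    intro t ht
    obtain ⟨t₀, ht₀m, ht₀max⟩ := isCompact_Icc.exists_isMaxOn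
      (Set.nonempty_Icc.2 ht) hcB.continuousOn
    have h0t₀ : (0:ℝ) ≤ t₀ := ht₀m.1
    have hmax : ∀ u ∈ Set.Icc (0:ℝ) t₀, |lB u| ≤ lB t₀ := fun u hu => by
      rw [abs_of_nonneg (hposB u)]
      exact ht₀max ⟨hu.1, hu.2.trans ht₀m.2⟩
    have hconv : |convK h₃ lB t₀| ≤ l1 h₃ * lB t₀ :=
      Aux9.conv_abs_bound_Icc k₃ hcB h0t₀ (hposB t₀) hmax
    have heq := heqB t₀ h0t₀
    simp only at heq
    have h3 : (1 - α) * convK h₃ lB t₀ ≤ κ₃ * lB t₀ := by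
      rw [hκ₃]
      have h4 := le_of_abs_le hconv
      nlinarith
    have h5 := hg_le t₀ h0t₀
    have h6 : lB t₀ ≤ G / (1 - κ₃) := by
      rw [le_div_iff₀ h1κ]; nlinarith
    exact le_trans (ht₀max ⟨ht, le_rfl⟩) h6
  -- the recentred function F
  set c := μB + ΦAB (κ₄ * ℓA) with hcdef
  have hc0 : 0 ≤ c := add_nonneg hμB (hABpos _ (mul_nonneg hk4.le hℓA))
  set c' := c / (1 - κ₃) with hc'def
  have hc'0 : 0 ≤ c' := div_nonneg hc0 h1κ.le
  have hc'eq : c' * (1 - κ₃) = c := div_mul_cancel₀ c (ne_of_gt h1κ)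
  set F := fun t => lB t - c' with hF
  have hFc : Continuous F := hcB.sub continuous_const
  set M₀ := G / (1 - κ₃) + c' with hM₀def
  have hM₀0 : 0 ≤ M₀ := add_nonneg (div_nonneg hG0 h1κ.le) hc'0
  have hM₀ : ∀ u, 0 ≤ u → |F u| ≤ M₀ := by
    intro u hu
    have h1 := hposB u
    have h2 := hBddB u hu
    rw [hF]
    rw [abs_le]
    constructor
    · simp only; rw [hM₀def]; have := div_nonneg hG0 h1κ.le; linarith
    · simp only; rw [hM₀def]; linarith
  -- decomposition of the convolution
  have hconv_split : ∀ t, 0 ≤ t →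
      convK h₃ lB t = convK h₃ F t + c' * ∫ s in (0:ℝ)..t, h₃ s := by
    intro t ht
    have h1 := Aux9.conv_add_const (h := h₃) (f := F) (c := c') k₃ hFc ht
    have h2 : (fun u => F u + c') = lB := by funext u; simp only [hF]; ring
    rw [h2] at h1
    exact h1
  -- equation for F
  have hFeq : ∀ t, 0 ≤ t → F t =
      ((ΦAB (α * convK h₄ lA t) - ΦAB (κ₄ * ℓA)) +
        c' * ((1 - α) * (∫ s in (0:ℝ)..t, h₃ s) - κ₃)) + (1 - α) * convK h₃ F t := by
    intro t ht
    have hB := heqB t ht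
    simp only at hB
    have hsp := hconv_split t ht
    show lB t - c' = _
    rw [hB, hsp]
    linear_combination -hc'eq
  -- the error term tends to 0
  have hE0 : Tendsto (fun t => (ΦAB (α * convK h₄ lA t) - ΦAB (κ₄ * ℓA)) +
      c' * ((1 - α) * (∫ s in (0:ℝ)..t, h₃ s) - κ₃)) atTop (𝓝 0) := by
    have p1 : Tendsto (fun t => ΦAB (α * convK h₄ lA t) - ΦAB (κ₄ * ℓA)) atTop (𝓝 0) := by
      simpa using hgc.sub_const (ΦAB (κ₄ * ℓA))
    have p2 : Tendsto (fun t => c' * ((1 - α) * (∫ s in (0:ℝ)..t, h₃ s) - κ₃)) atTop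
        (𝓝 (c' * ((1 - α) * l1 h₃ - κ₃))) :=
      (((intervalIntegral_tendsto_integral_Ioi 0 k₃.2.2 tendsto_id).const_mul
        (1 - α)).sub_const κ₃).const_mul c'
    have hz : c' * ((1 - α) * l1 h₃ - κ₃) = 0 := by rw [hκ₃]; ring
    rw [hz] at p2
    simpa using p1.add p2
  -- contraction step
  have step : ∀ B, 0 ≤ B → (∀ᶠ u in atTop, |F u| ≤ B) → ∀ ε, 0 < ε →
      ∀ᶠ t in atTop, |F t| ≤ κ₃ * B + ε := by
    intro B hB hev ε hε
    have htb := Aux9.tailBound k₃ hFc hM₀ hB hev (show 0 < ε / 2 by positivity)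
    have heev : ∀ᶠ t in atTop, |(ΦAB (α * convK h₄ lA t) - ΦAB (κ₄ * ℓA)) +
        c' * ((1 - α) * (∫ s in (0:ℝ)..t, h₃ s) - κ₃)| ≤ ε / 2 := by
      have h1 := hE0.abs
      rw [abs_zero] at h1
      exact h1.eventually (eventually_le_nhds (by positivity))
    filter_upwards [htb, heev, eventually_ge_atTop (0:ℝ)] with t h1 h2 ht
    have h3 := hFeq t ht
    have h4 : |F t| ≤ |(ΦAB (α * convK h₄ lA t) - ΦAB (κ₄ * ℓA)) +
        c' * ((1 - α) * (∫ s in (0:ℝ)..t, h₃ s) - κ₃)| + (1 - α) * |convK h₃ F t| := by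
      rw [h3]
      refine (abs_add_le _ _).trans ?_
      gcongr
      rw [abs_mul, abs_of_nonneg (by linarith : (0:ℝ) ≤ 1 - α)]
    have h5 : (1 - α) * |convK h₃ F t| ≤ (1 - α) * (l1 h₃ * B + ε / 2) :=
      mul_le_mul_of_nonneg_left h1 (by linarith)
    have h6 : (1 - α) * (l1 h₃ * B + ε / 2) = κ₃ * B + (1 - α) * (ε / 2) := by
      rw [hκ₃]; ring
    have h7 : (1 - α) * (ε / 2) ≤ ε / 2 := mul_le_of_le_one_left (by positivity) (by linarith)
    linarith
  -- iteration
  have iter : ∀ ε, 0 < ε → ∀ n : ℕ, ∀ᶠ t in atTop, |F t| ≤ κ₃ ^ n * M₀ + ε / (1 - κ₃) := by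
    intro ε hε n
    induction n with
    | zero =>
      filter_upwards [eventually_ge_atTop (0:ℝ)] with t ht
      have h1 := hM₀ t ht
      have h2 : 0 ≤ ε / (1 - κ₃) := by positivity
      simp only [pow_zero, one_mul]
      exact h1.trans (le_add_of_nonneg_right h2)
    | succ n ih =>
      have hBn : 0 ≤ κ₃ ^ n * M₀ + ε / (1 - κ₃) := by positivity
      refine (step _ hBn ih ε hε).mono fun t ht => ht.trans (le_of_eq ?_)
      field_simp
      ring
  -- conclusion: F → 0
  have hF0 : Tendsto F atTop (𝓝 0) := by
    rw [NormedAddCommGroup.tendsto_nhds_zero]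
    intro δ hδ
    have hεp : 0 < δ * (1 - κ₃) / 4 := by positivity
    have hpow : Tendsto (fun n : ℕ => κ₃ ^ n * M₀) atTop (𝓝 0) := by
      simpa using (tendsto_pow_atTop_nhds_zero_of_lt_one hρ0 hk3).mul_const M₀
    obtain ⟨n, hn⟩ := (hpow.eventually (gt_mem_nhds (show (0:ℝ) < δ / 2 by positivity))).exists
    filter_upwards [iter _ hεp n] with t ht
    have hq : δ * (1 - κ₃) / 4 / (1 - κ₃) = δ / 4 := by field_simp
    rw [hq] at ht
    rw [Real.norm_eq_abs]
    linarith
  -- conclusion: lB → c'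
  have hfin : Tendsto (fun t => F t + c') atTop (𝓝 (0 + c')) :=
    hF0.add tendsto_const_nhds
  rw [zero_add] at hfin
  have h2 : ∀ t, F t + c' = lB t := fun t => by simp only [hF]; ring
  exact hfin.congr h2
end
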